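/- arXiv:1708.06400 — 7 statements merged into one kernel-verified Lean document; each statement's English description precedes it below -/
import Mathlib

section
/- Assume sup_{u∈S} f(u) < ∞ and μ(S) > 0, and set η = μ(S)·sup_{u∈S} f(u), where μ is Lebesgue measure. Then for every integer n ≥ 1, the optimal average per-user rate satisfies R_n ≤ (η r/d)·log n + η·log(1 + P/μ(S)^{r/d}) + 2ηr. -/
open MeasureTheory Real Set
open scoped ENNReal BigOperators

-- volume bound of a closed ball in EuclideanSpace by a box
lemma vol_closedBall_le (d : ℕ) (x : EuclideanSpace ℝ (Fin d)) {δ : ℝ} (hδ : 0 ≤ δ) :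
    volume (Metric.closedBall x δ) ≤ ENNReal.ofReal (2 * δ) ^ d := by
  have hsub : Metric.closedBall x δ ⊆
      (MeasurableEquiv.toLp 2 (Fin d → ℝ)).symm ⁻¹'
        (Set.univ.pi fun i => Set.Icc (x i - δ) (x i + δ)) := by
    intro u hu
    simp only [Set.mem_preimage, Set.mem_pi, Set.mem_univ, forall_true_left, Set.mem_Icc,
      MeasurableEquiv.coe_toLp_symm]
    intro i
    have hdist : dist (u i) (x i) ≤ dist u x := by
      rw [EuclideanSpace.dist_eq]
      have hs : dist (u i) (x i) ^ 2 ≤ ∑ j, dist (u j) (x j) ^ 2 :=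
        Finset.single_le_sum (f := fun j => dist (u j) (x j) ^ 2)
          (fun j _ => sq_nonneg _) (Finset.mem_univ i)
      have h1 : dist (u i) (x i) = Real.sqrt (dist (u i) (x i) ^ 2) := by
        rw [Real.sqrt_sq dist_nonneg]
      rw [h1]
      exact Real.sqrt_le_sqrt hs
    have := hu
    rw [Metric.mem_closedBall] at this
    have h2 : dist (u i) (x i) ≤ δ := hdist.trans this
    rw [Real.dist_eq, abs_le] at h2
    constructor <;> [linarith [h2.1]; linarith [h2.2]]
  refine (measure_mono hsub).trans ?_
  rw [(EuclideanSpace.volume_preserving_symm_measurableEquiv_toLp (Fin d)).measure_preimage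
    (MeasurableSet.univ_pi fun i => measurableSet_Icc).nullMeasurableSet]
  rw [volume_pi_pi]
  simp only [Real.volume_Icc]
  have : ∀ i : Fin d, x i + δ - (x i - δ) = 2 * δ := fun i => by ring
  simp only [this]
  rw [Finset.prod_const, Finset.card_univ, Fintype.card_fin]

-- the cube has finite volume
lemma vol_cube_ne_top (d : ℕ) (M : ℝ) :
    volume {u : EuclideanSpace ℝ (Fin d) | ∀ i, u i ∈ Set.Icc (0 : ℝ) M} ≠ ⊤ := by
  have hsub : {u : EuclideanSpace ℝ (Fin d) | ∀ i, u i ∈ Set.Icc (0 : ℝ) M} ⊆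
      (MeasurableEquiv.toLp 2 (Fin d → ℝ)).symm ⁻¹'
        (Set.univ.pi fun _ => Set.Icc (0 : ℝ) M) := by
    intro u hu
    simp only [Set.mem_preimage, Set.mem_pi, Set.mem_univ, forall_true_left,
      MeasurableEquiv.coe_toLp_symm]
    exact fun i => hu i
  refine ne_top_of_le_ne_top ?_ (measure_mono hsub)
  rw [(EuclideanSpace.volume_preserving_symm_measurableEquiv_toLp (Fin d)).measure_preimage
    (MeasurableSet.univ_pi fun i => measurableSet_Icc).nullMeasurableSet]
  rw [volume_pi_pi]
  simp only [Real.volume_Icc]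
  exact (ENNReal.prod_lt_top (fun i _ => ENNReal.ofReal_lt_top)).ne

-- integral of exponential decay
lemma integral_exp_neg_mul_Ioi {b a : ℝ} (hb : 0 < b) :
    ∫ x in Set.Ioi a, Real.exp (-b * x) = Real.exp (-b * a) / b := by
  have hd : ∀ x ∈ Set.Ici a, HasDerivAt (fun t => -Real.exp (-b * t) / b)
      (Real.exp (-b * x)) x := by
    intro x _
    have h1 : HasDerivAt (fun t : ℝ => -b * t) (-b) x := by
      simpa using (hasDerivAt_id x).const_mul (-b)
    have h2 := (Real.hasDerivAt_exp (-b * x)).comp x h1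
    have h3 := (h2.neg).div_const b
    exact h3.congr_deriv (by rw [div_eq_iff hb.ne']; ring)
  have ht : Filter.Tendsto (fun t => -Real.exp (-b * t) / b) Filter.atTop (nhds 0) := by
    have h0 : Filter.Tendsto (fun t : ℝ => b * t) Filter.atTop Filter.atTop :=
      Filter.Tendsto.const_mul_atTop hb Filter.tendsto_id
    have h1 : Filter.Tendsto (fun t : ℝ => Real.exp (-b * t)) Filter.atTop (nhds 0) := by
      have h2 : (fun t : ℝ => Real.exp (-b * t))
          = (fun x : ℝ => Real.exp (-x)) ∘ (fun t : ℝ => b * t) := by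
        funext t; simp [neg_mul]
      rw [h2]
      exact Real.tendsto_exp_neg_atTop_nhds_zero.comp h0
    have h4 := (h1.neg).div_const b
    simpa using h4
  have := integral_Ioi_of_hasDerivAt_of_tendsto' hd (exp_neg_integrableOn_Ioi a hb) ht
  rw [this]
  field_simp
  ring

/-- The average per-user rate of a deployment `X` of `n` antenna locations,
with power `P`, path-loss exponent `r`, cell `S`, and user density `f`. -/
noncomputable def avgRate (d n : ℕ) (P r : ℝ) (S : Set (EuclideanSpace ℝ (Fin d)))
    (f : EuclideanSpace ℝ (Fin d) → ℝ) (X : Fin n → EuclideanSpace ℝ (Fin d)) : ℝ≥0∞ :=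
  ∫⁻ u in S, ENNReal.ofReal (Real.log (1 + (P / n) * ∑ i, ‖u - X i‖ ^ (-r)) * f u)

/-- The optimal average per-user rate `R_n`, the supremum over all deployments. -/
noncomputable def optRate (d n : ℕ) (P r : ℝ) (S : Set (EuclideanSpace ℝ (Fin d)))
    (f : EuclideanSpace ℝ (Fin d) → ℝ) : ℝ≥0∞ :=
  ⨆ X : Fin n → EuclideanSpace ℝ (Fin d), avgRate d n P r S f X

set_option maxHeartbeats 2000000 in
theorem rate_upper_bound (d : ℕ) (hd : 1 ≤ d) (M P r : ℝ) (hM : 0 < M) (hP : 0 < P)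
    (hr : 0 ≤ r) (S : Set (EuclideanSpace ℝ (Fin d))) (hSmeas : MeasurableSet S)
    (hSsub : S ⊆ {u : EuclideanSpace ℝ (Fin d) | ∀ i, u i ∈ Set.Icc (0 : ℝ) M})
    (f : EuclideanSpace ℝ (Fin d) → ℝ) (hf0 : ∀ u, 0 ≤ f u)
    (hfS : ∀ u ∉ S, f u = 0) (hf1 : (∫ u in S, f u) = 1)
    (hfbdd : BddAbove (f '' S)) (hSpos : volume S ≠ 0)
    (η : ℝ) (hη : η = (volume S).toReal * sSup (f '' S))
    (n : ℕ) (hn : 1 ≤ n) :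
    optRate d n P r S f ≤
      ENNReal.ofReal (η * r / d * Real.log n
        + η * Real.log (1 + P / (volume S).toReal ^ (r / d)) + 2 * η * r) := by
  classical
  have hd' : (1:ℝ) ≤ d := by exact_mod_cast hd
  have hdpos : (0:ℝ) < d := by linarith
  have hVtop : volume S ≠ ⊤ := ne_top_of_le_ne_top (vol_cube_ne_top d M) (measure_mono hSsub)
  set V := (volume S).toReal with hVdef
  have hVpos : 0 < V := ENNReal.toReal_pos hSpos hVtop
  have hVol : volume S = ENNReal.ofReal V := (ENNReal.ofReal_toReal hVtop).symm
  obtain ⟨u₀, hu₀⟩ : S.Nonempty := nonempty_of_measure_ne_zero hSpos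
  set F := sSup (f '' S) with hFdef
  have hfF : ∀ u ∈ S, f u ≤ F := fun u hu => le_csSup hfbdd ⟨u, hu, rfl⟩
  have hF0 : 0 ≤ F := le_trans (hf0 u₀) (hfF u₀ hu₀)
  have hη0 : 0 ≤ η := by rw [hη]; exact mul_nonneg ENNReal.toReal_nonneg hF0
  have hn' : (1:ℝ) ≤ n := by exact_mod_cast hn
  have hn0 : (0:ℝ) < n := by linarith
  haveI : Nonempty (Fin n) := Fin.pos_iff_nonempty.mp hn
  have hlogn : 0 ≤ Real.log n := Real.log_nonneg hn'
  rcases eq_or_lt_of_le hr with hr0 | hrpos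
  · -- r = 0 case
    subst hη
    rw [optRate, iSup_le_iff]
    intro X
    rw [avgRate]
    have hsimp : ∀ u : EuclideanSpace ℝ (Fin d),
        Real.log (1 + (P / n) * ∑ i : Fin n, ‖u - X i‖ ^ (-r)) = Real.log (1 + P) := by
      intro u
      have : ∀ i : Fin n, ‖u - X i‖ ^ (-r) = 1 := by
        intro i; rw [← hr0, neg_zero, Real.rpow_zero]
      simp only [this, Finset.sum_const, Finset.card_univ, Fintype.card_fin, nsmul_eq_mul,
        mul_one]
      congr 2
      field_simp
    calc ∫⁻ u in S, ENNReal.ofReal (Real.log (1 + (P / n) * ∑ i, ‖u - X i‖ ^ (-r)) * f u)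
        ≤ ∫⁻ _ in S, ENNReal.ofReal (Real.log (1 + P) * F) := by
          refine lintegral_mono_ae ?_
          filter_upwards [ae_restrict_mem hSmeas] with u hu
          rw [hsimp u]
          refine ENNReal.ofReal_le_ofReal ?_
          exact mul_le_mul_of_nonneg_left (hfF u hu) (Real.log_nonneg (by linarith))
      _ = ENNReal.ofReal (Real.log (1 + P) * F) * volume S := setLIntegral_const _ _
      _ ≤ ENNReal.ofReal (V * F * 0 / d * Real.log n
            + V * F * Real.log (1 + P / V ^ (r / d)) + 2 * (V * F) * 0) := by
          rw [hVol, ← ENNReal.ofReal_mul (mul_nonneg (Real.log_nonneg (by linarith)) hF0)]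
          refine ENNReal.ofReal_le_ofReal ?_
          have hV0 : V ^ (r / (d:ℝ)) = 1 := by
            rw [← hr0, zero_div, Real.rpow_zero]
          rw [hV0]
          simp only [div_one, mul_zero, zero_div, zero_mul, add_zero, zero_add]
          ring_nf
          exact le_refl _
      _ ≤ _ := by rw [← hr0]
  -- main case : r > 0
  have hrne : r ≠ 0 := ne_of_gt hrpos
  have hdne : (d:ℝ) ≠ 0 := ne_of_gt hdpos
  rw [optRate, iSup_le_iff]
  intro X
  set D : EuclideanSpace ℝ (Fin d) → ℝ := fun u => ⨅ i, dist u (X i) with hDdef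
  have hbdd : ∀ u : EuclideanSpace ℝ (Fin d),
      BddBelow (Set.range fun i : Fin n => dist u (X i)) :=
    fun u => ⟨0, by rintro _ ⟨i, rfl⟩; exact dist_nonneg⟩
  have hD0 : ∀ u, 0 ≤ D u := fun u => le_ciInf fun i => dist_nonneg
  have hDle : ∀ u i, D u ≤ dist u (X i) := fun u i => ciInf_le (hbdd u) i
  have hDmeas : Measurable D :=
    Measurable.iInf fun i => (continuous_id.dist continuous_const).measurable
  set g : ℝ → ℝ := fun x => if x ≤ 0 then 0 else Real.exp (Real.log x * (-r)) with hgdef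
  have hg_eq : ∀ x : ℝ, 0 ≤ x → x ^ (-r) = g x := by
    intro x hx
    rcases eq_or_lt_of_le hx with h | h
    · rw [← h, Real.zero_rpow (neg_ne_zero.mpr hrne), hgdef]
      simp
    · rw [Real.rpow_def_of_pos h, hgdef]
      simp [not_le.mpr h]
  have hgmeas : Measurable g :=
    Measurable.ite (measurableSet_le measurable_id measurable_const) measurable_const
      (Real.measurable_exp.comp (Real.measurable_log.mul measurable_const))
  set L : EuclideanSpace ℝ (Fin d) → ℝ := fun u => Real.log (1 + P * D u ^ (-r)) with hLdef
  have hL0 : ∀ u, 0 ≤ L u := fun u =>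
    Real.log_nonneg (le_add_of_nonneg_right (mul_nonneg hP.le (Real.rpow_nonneg (hD0 u) _)))
  have hLmeas : Measurable L := by
    have hLg : L = fun u => Real.log (1 + P * g (D u)) := by
      funext u
      show Real.log (1 + P * D u ^ (-r)) = Real.log (1 + P * g (D u))
      rw [hg_eq _ (hD0 u)]
    rw [hLg]
    exact Real.measurable_log.comp
      (measurable_const.add (measurable_const.mul (hgmeas.comp hDmeas)))
  -- a.e. positivity of D
  have hZ : volume {u : EuclideanSpace ℝ (Fin d) | ¬ 0 < D u} = 0 := by
    have hsub : {u : EuclideanSpace ℝ (Fin d) | ¬ 0 < D u} ⊆ ⋃ i, {X i} := by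
      intro u hu
      simp only [Set.mem_setOf_eq] at hu
      have h0 : D u = 0 := le_antisymm (not_lt.mp hu) (hD0 u)
      obtain ⟨i, hi⟩ := exists_eq_ciInf_of_finite (f := fun i : Fin n => dist u (X i))
      have hzero : dist u (X i) = 0 := by
        rw [hi]
        exact h0
      rw [dist_eq_zero] at hzero
      exact Set.mem_iUnion.mpr ⟨i, by simp [hzero]⟩
    refine measure_mono_null hsub (measure_iUnion_null fun i => ?_)
    have h2 : volume ({X i} : Set (EuclideanSpace ℝ (Fin d))) ≤ 0 := by
      have h3 := vol_closedBall_le d (X i) (le_refl (0:ℝ))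
      rw [Metric.closedBall_zero] at h3
      simpa [zero_pow (by omega : d ≠ 0)] using h3
    exact le_antisymm h2 zero_le
  -- Step A
  have stepA : avgRate d n P r S f X
      ≤ ENNReal.ofReal F * ∫⁻ u in S, ENNReal.ofReal (L u) := by
    rw [avgRate]
    have hae : ∀ᵐ u ∂(volume.restrict S),
        ENNReal.ofReal (Real.log (1 + (P / n) * ∑ i, ‖u - X i‖ ^ (-r)) * f u)
          ≤ ENNReal.ofReal F * ENNReal.ofReal (L u) := by
      have hpos : ∀ᵐ u ∂(volume.restrict S), 0 < D u := by
        refine ae_restrict_of_ae ?_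
        rw [ae_iff]
        exact hZ
      filter_upwards [ae_restrict_mem hSmeas, hpos] with u hu hDu
      have hsum0 : (0:ℝ) ≤ ∑ i, ‖u - X i‖ ^ (-r) :=
        Finset.sum_nonneg fun i _ => Real.rpow_nonneg (norm_nonneg _) _
      have hsum : ∑ i, ‖u - X i‖ ^ (-r) ≤ (n:ℝ) * D u ^ (-r) := by
        have hterm : ∀ i : Fin n, ‖u - X i‖ ^ (-r) ≤ D u ^ (-r) := by
          intro i
          rw [← dist_eq_norm u (X i), Real.rpow_neg (hD0 u), Real.rpow_neg dist_nonneg]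
          exact inv_anti₀ (Real.rpow_pos_of_pos hDu r)
            (Real.rpow_le_rpow (hD0 u) (hDle u i) hr)
        calc ∑ i, ‖u - X i‖ ^ (-r) ≤ ∑ _i : Fin n, D u ^ (-r) :=
              Finset.sum_le_sum fun i _ => hterm i
          _ = (n:ℝ) * D u ^ (-r) := by
              rw [Finset.sum_const, Finset.card_univ, Fintype.card_fin, nsmul_eq_mul]
      have harg : 1 + (P / n) * ∑ i, ‖u - X i‖ ^ (-r) ≤ 1 + P * D u ^ (-r) := by
        have h2 : (P / n) * ((n:ℝ) * D u ^ (-r)) = P * D u ^ (-r) := by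
          rw [← mul_assoc, div_mul_cancel₀ P (ne_of_gt hn0)]
        have h3 : (P / n) * ∑ i, ‖u - X i‖ ^ (-r) ≤ (P / n) * ((n:ℝ) * D u ^ (-r)) :=
          mul_le_mul_of_nonneg_left hsum (le_of_lt (div_pos hP hn0))
        linarith
      have hprod : (0:ℝ) ≤ (P / n) * ∑ i, ‖u - X i‖ ^ (-r) :=
        mul_nonneg (le_of_lt (div_pos hP hn0)) hsum0
      have hpos1 : (0:ℝ) < 1 + (P / n) * ∑ i, ‖u - X i‖ ^ (-r) := by linarith
      have hlog : Real.log (1 + (P / n) * ∑ i, ‖u - X i‖ ^ (-r)) ≤ L u :=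
        Real.log_le_log hpos1 harg
      have hlog0 : 0 ≤ Real.log (1 + (P / n) * ∑ i, ‖u - X i‖ ^ (-r)) :=
        Real.log_nonneg (by linarith)
      calc ENNReal.ofReal (Real.log (1 + (P / n) * ∑ i, ‖u - X i‖ ^ (-r)) * f u)
          ≤ ENNReal.ofReal (F * L u) := ENNReal.ofReal_le_ofReal (by
            calc Real.log (1 + (P / n) * ∑ i, ‖u - X i‖ ^ (-r)) * f u
                ≤ L u * F := mul_le_mul hlog (hfF u hu) (hf0 u) (hL0 u)
              _ = F * L u := mul_comm _ _)
        _ = ENNReal.ofReal F * ENNReal.ofReal (L u) := ENNReal.ofReal_mul hF0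
    calc ∫⁻ u in S, ENNReal.ofReal (Real.log (1 + (P / n) * ∑ i, ‖u - X i‖ ^ (-r)) * f u)
        ≤ ∫⁻ u in S, ENNReal.ofReal F * ENNReal.ofReal (L u) := lintegral_mono_ae hae
      _ = ENNReal.ofReal F * ∫⁻ u in S, ENNReal.ofReal (L u) :=
          lintegral_const_mul' _ _ ENNReal.ofReal_ne_top
  -- layer cake
  have hlayer : (∫⁻ u in S, ENNReal.ofReal (L u))
      = ∫⁻ t in Set.Ioi (0:ℝ), (volume.restrict S) {u | t < L u} :=
    lintegral_eq_lintegral_meas_lt (volume.restrict S)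
      (Filter.Eventually.of_forall hL0) hLmeas.aemeasurable
  -- constants
  set b := (d:ℝ) / r with hbdef
  have hb : 0 < b := div_pos hdpos hrpos
  set c := 2 ^ r * (n:ℝ) ^ (r / (d:ℝ)) * P / V ^ (r / (d:ℝ)) with hcdef
  have hc : 0 < c := by
    refine div_pos (mul_pos (mul_pos ?_ ?_) hP) ?_
    · exact Real.rpow_pos_of_pos two_pos r
    · exact Real.rpow_pos_of_pos hn0 _
    · exact Real.rpow_pos_of_pos hVpos _
  set T := Real.log (1 + c) with hTdef
  have hT : 0 < T := Real.log_pos (by linarith)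
  have hexpT : Real.exp T - 1 = c := by
    rw [hTdef, Real.exp_log (by linarith)]
    ring
  -- level set inclusion bound
  have hlevel : ∀ t : ℝ, 0 < t → (volume.restrict S) {u | t < L u}
      ≤ (n : ℝ≥0∞) * ENNReal.ofReal (2 * (P / (Real.exp t - 1)) ^ (1/r)) ^ d := by
    intro t ht
    set δ := (P / (Real.exp t - 1)) ^ (1/r) with hδdef
    have het : 0 < Real.exp t - 1 := by
      have h1 : (1:ℝ) < Real.exp t := by
        rw [← Real.exp_zero]
        exact Real.exp_lt_exp.mpr ht
      linarith
    have hδpos : 0 < δ := Real.rpow_pos_of_pos (div_pos hP het) _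
    have hsub : {u | t < L u} ⊆ ⋃ i, Metric.closedBall (X i) δ := by
      intro u hu
      simp only [Set.mem_setOf_eq] at hu
      have h1 : Real.exp t < 1 + P * D u ^ (-r) := by
        have h2 := Real.exp_lt_exp.mpr hu
        rwa [Real.exp_log (lt_of_lt_of_le one_pos (le_add_of_nonneg_right
          (mul_nonneg hP.le (Real.rpow_nonneg (hD0 u) _))))] at h2
      have hDpos : 0 < D u := by
        by_contra h
        have h0 : D u = 0 := le_antisymm (not_lt.mp h) (hD0 u)
        rw [h0, Real.zero_rpow (neg_ne_zero.mpr hrne), mul_zero, add_zero] at h1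
        linarith
      have h3 : D u ^ r < P / (Real.exp t - 1) := by
        rw [Real.rpow_neg (hD0 u)] at h1
        have h5 : 0 < D u ^ r := Real.rpow_pos_of_pos hDpos r
        rw [lt_div_iff₀ het]
        calc D u ^ r * (Real.exp t - 1) < D u ^ r * (P * (D u ^ r)⁻¹) := by
              have h4 : Real.exp t - 1 < P * (D u ^ r)⁻¹ := by linarith
              exact mul_lt_mul_of_pos_left h4 h5
          _ = P := by field_simp
      have h6 : D u < δ := by
        have h7 : (D u ^ r) ^ (1/r) < δ :=
          Real.rpow_lt_rpow (Real.rpow_nonneg (hD0 u) r) h3 (by positivity)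
        rwa [one_div, Real.rpow_rpow_inv (hD0 u) hrne] at h7
      obtain ⟨i, hi⟩ := exists_lt_of_ciInf_lt h6
      exact Set.mem_iUnion.mpr ⟨i, Metric.mem_closedBall.mpr hi.le⟩
    have hmeasset : MeasurableSet {u | t < L u} := measurableSet_lt measurable_const hLmeas
    calc (volume.restrict S) {u | t < L u}
        ≤ volume {u | t < L u} := by
          rw [Measure.restrict_apply hmeasset]
          exact measure_mono Set.inter_subset_left
      _ ≤ volume (⋃ i, Metric.closedBall (X i) δ) := measure_mono hsub
      _ ≤ ∑' i : Fin n, volume (Metric.closedBall (X i) δ) := measure_iUnion_le _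
      _ = ∑ i : Fin n, volume (Metric.closedBall (X i) δ) := tsum_fintype _
      _ ≤ ∑ _i : Fin n, ENNReal.ofReal (2 * δ) ^ d :=
          Finset.sum_le_sum fun i _ => vol_closedBall_le d (X i) hδpos.le
      _ = (n : ℝ≥0∞) * ENNReal.ofReal (2 * δ) ^ d := by
          simp [Finset.sum_const, Finset.card_univ]
  -- part 2 : tail integral
  set A := (n:ℝ) * 2 ^ d * (P ^ b / c ^ b) * Real.exp (T * b) with hAdef
  have hA0 : 0 ≤ A := by positivity
  have hcb : c ^ b = 2 ^ d * (n:ℝ) * P ^ b / V := by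
    rw [hcdef, Real.div_rpow (by positivity) (by positivity),
      Real.mul_rpow (by positivity) hP.le, Real.mul_rpow (by positivity) (by positivity)]
    have h2 : ((2:ℝ) ^ r) ^ b = 2 ^ d := by
      rw [← Real.rpow_mul (by norm_num : (0:ℝ) ≤ 2)]
      have : r * b = (d:ℝ) := by
        rw [hbdef]; field_simp
      rw [this, Real.rpow_natCast]
    have h3 : ((n:ℝ) ^ (r/(d:ℝ))) ^ b = (n:ℝ) := by
      rw [← Real.rpow_mul hn0.le]
      have : (r/(d:ℝ)) * b = 1 := by
        rw [hbdef]; field_simp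
      rw [this, Real.rpow_one]
    have h4 : (V ^ (r/(d:ℝ))) ^ b = V := by
      rw [← Real.rpow_mul hVpos.le]
      have : (r/(d:ℝ)) * b = 1 := by
        rw [hbdef]; field_simp
      rw [this, Real.rpow_one]
    rw [h2, h3, h4]
  have hreal_tail : ∀ t : ℝ, t ∈ Set.Ioi T →
      (n:ℝ) * (2 * (P / (Real.exp t - 1)) ^ (1/r)) ^ d ≤ A * Real.exp (-b * t) := by
    intro t ht
    rw [Set.mem_Ioi] at ht
    have het : 0 < Real.exp t - 1 := by
      have h1 : (1:ℝ) < Real.exp t := by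
        rw [← Real.exp_zero]
        exact Real.exp_lt_exp.mpr (hT.trans ht)
      linarith
    have hkey : c * Real.exp (t - T) ≤ Real.exp t - 1 := by
      have h1 : Real.exp (t - T) * Real.exp T = Real.exp t := by
        rw [← Real.exp_add]; ring_nf
      have h2 : (1:ℝ) ≤ Real.exp (t - T) := Real.one_le_exp (by linarith)
      nlinarith [hexpT]
    have hδd : ((P / (Real.exp t - 1)) ^ (1/r)) ^ d = P ^ b / (Real.exp t - 1) ^ b := by
      rw [← Real.rpow_natCast ((P / (Real.exp t - 1)) ^ (1/r)) d,
        ← Real.rpow_mul (by positivity)]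
      have h9 : (1/r) * (d:ℝ) = b := by rw [hbdef]; field_simp
      rw [h9, Real.div_rpow hP.le het.le]
    have hdenom : c ^ b * Real.exp ((t - T) * b) ≤ (Real.exp t - 1) ^ b := by
      have h1 : (c * Real.exp (t - T)) ^ b ≤ (Real.exp t - 1) ^ b :=
        Real.rpow_le_rpow (by positivity) hkey hb.le
      rwa [Real.mul_rpow hc.le (Real.exp_pos _).le,
        Real.rpow_def_of_pos (Real.exp_pos _), Real.log_exp] at h1
    have hfrac : P ^ b / (Real.exp t - 1) ^ b ≤ P ^ b / (c ^ b * Real.exp ((t - T) * b)) :=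
      div_le_div_of_nonneg_left (Real.rpow_nonneg hP.le _)
        (mul_pos (Real.rpow_pos_of_pos hc b) (Real.exp_pos _)) hdenom
    rw [mul_pow, hδd]
    have hexp3 : (Real.exp ((t - T) * b))⁻¹ = Real.exp (T * b) * Real.exp (-b * t) := by
      rw [← Real.exp_add, ← Real.exp_neg]
      congr 1
      ring
    have hA : A * Real.exp (-b * t)
        = (n:ℝ) * 2 ^ d * (P ^ b / (c ^ b * Real.exp ((t - T) * b))) := by
      rw [show (n:ℝ) * 2 ^ d * (P ^ b / (c ^ b * Real.exp ((t - T) * b)))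
          = (n:ℝ) * 2 ^ d * (P ^ b / c ^ b * (Real.exp ((t - T) * b))⁻¹) from by
        rw [div_mul_eq_div_div, div_eq_mul_inv (P ^ b / c ^ b)]]
      rw [hexp3, hAdef]
      ring
    rw [hA]
    have := mul_le_mul_of_nonneg_left hfrac (by positivity : (0:ℝ) ≤ (n:ℝ) * 2 ^ d)
    calc (n:ℝ) * (2 ^ d * (P ^ b / (Real.exp t - 1) ^ b))
        = (n:ℝ) * 2 ^ d * (P ^ b / (Real.exp t - 1) ^ b) := by ring
      _ ≤ (n:ℝ) * 2 ^ d * (P ^ b / (c ^ b * Real.exp ((t - T) * b))) := this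
  have htail : (∫⁻ t in Set.Ioi T, (volume.restrict S) {u | t < L u})
      ≤ ENNReal.ofReal (V * (r / d)) := by
    have hInt : MeasureTheory.IntegrableOn (fun t => A * Real.exp (-b * t)) (Set.Ioi T) :=
      (exp_neg_integrableOn_Ioi T hb).const_mul A
    calc (∫⁻ t in Set.Ioi T, (volume.restrict S) {u | t < L u})
        ≤ ∫⁻ t in Set.Ioi T, ENNReal.ofReal (A * Real.exp (-b * t)) := by
          refine setLIntegral_mono (by fun_prop) ?_
          intro t ht
          have ht' : T < t := ht
          have het : 0 < Real.exp t - 1 := by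
            have h1 : (1:ℝ) < Real.exp t := by
              rw [← Real.exp_zero]
              exact Real.exp_lt_exp.mpr (hT.trans ht')
            linarith
          have hδ0 : (0:ℝ) ≤ 2 * (P / (Real.exp t - 1)) ^ (1/r) := by
            have := Real.rpow_nonneg (le_of_lt (div_pos hP het)) (1/r)
            linarith
          refine le_trans (hlevel t (hT.trans ht')) ?_
          rw [← ENNReal.ofReal_pow hδ0, ← ENNReal.ofReal_natCast n,
            ← ENNReal.ofReal_mul (Nat.cast_nonneg n)]
          exact ENNReal.ofReal_le_ofReal (hreal_tail t ht)
      _ = ENNReal.ofReal (∫ t in Set.Ioi T, A * Real.exp (-b * t)) :=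
          (ofReal_integral_eq_lintegral_ofReal hInt
            (Filter.Eventually.of_forall fun t => by positivity)).symm
      _ = ENNReal.ofReal (A * (Real.exp (-b * T) / b)) := by
          rw [MeasureTheory.integral_const_mul, integral_exp_neg_mul_Ioi hb]
      _ = ENNReal.ofReal (V * (r / d)) := by
          congr 1
          have h1 : Real.exp (T * b) * Real.exp (-b * T) = 1 := by
            rw [← Real.exp_add, show T * b + -b * T = 0 from by ring, Real.exp_zero]
          have h2 : A * (Real.exp (-b * T) / b)
              = (n:ℝ) * 2 ^ d * (P ^ b / c ^ b) * (Real.exp (T * b) * Real.exp (-b * T)) / b := by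
            rw [hAdef]
            ring
          rw [h2, h1, mul_one, hcb, hbdef]
          have hne1 : (n:ℝ) ≠ 0 := ne_of_gt hn0
          have hne2 : (2:ℝ) ^ d ≠ 0 := by positivity
          have hne3 : P ^ ((d:ℝ) / r) ≠ 0 := ne_of_gt (Real.rpow_pos_of_pos hP _)
          have hne4 : V ≠ 0 := ne_of_gt hVpos
          field_simp
  -- part 1
  have hhead : (∫⁻ t in Set.Ioc 0 T, (volume.restrict S) {u | t < L u})
      ≤ ENNReal.ofReal V * ENNReal.ofReal T := by
    calc (∫⁻ t in Set.Ioc 0 T, (volume.restrict S) {u | t < L u})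
        ≤ ∫⁻ _ in Set.Ioc (0:ℝ) T, volume S := by
          refine setLIntegral_mono measurable_const ?_
          intro t _
          rw [Measure.restrict_apply (measurableSet_lt measurable_const hLmeas)]
          exact measure_mono Set.inter_subset_right
      _ = volume S * volume (Set.Ioc (0:ℝ) T) := setLIntegral_const _ _
      _ = ENNReal.ofReal V * ENNReal.ofReal T := by
          rw [hVol, Real.volume_Ioc, sub_zero]
  -- combine
  have hIle : (∫⁻ u in S, ENNReal.ofReal (L u))
      ≤ ENNReal.ofReal V * ENNReal.ofReal T + ENNReal.ofReal (V * (r / d)) := by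
    rw [hlayer, ← Set.Ioc_union_Ioi_eq_Ioi hT.le,
      lintegral_union measurableSet_Ioi Set.Ioc_disjoint_Ioi_same]
    exact add_le_add hhead htail
  refine le_trans stepA (le_trans (mul_le_mul_of_nonneg_left hIle zero_le) ?_)
  rw [mul_add, ← mul_assoc, ← ENNReal.ofReal_mul hF0, ← ENNReal.ofReal_mul (by positivity),
    ← ENNReal.ofReal_mul hF0, ← ENNReal.ofReal_add (by positivity) (by positivity)]
  refine ENNReal.ofReal_le_ofReal ?_
  -- final real inequality
  have hηVF : η = V * F := hη
  have hTle : T ≤ r/(d:ℝ) * Real.log n + r * Real.log 2 + Real.log (1 + P / V ^ (r/(d:ℝ))) := by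
    rw [hTdef]
    have hge : (1:ℝ) ≤ (n:ℝ) ^ (r/(d:ℝ)) * 2 ^ r := by
      have h1 : (1:ℝ) ≤ (n:ℝ) ^ (r/(d:ℝ)) := Real.one_le_rpow hn' (by positivity)
      have h2 : (1:ℝ) ≤ (2:ℝ) ^ r := Real.one_le_rpow one_le_two hr
      nlinarith
    have hPV : 0 < P / V ^ (r/(d:ℝ)) := div_pos hP (Real.rpow_pos_of_pos hVpos _)
    have h1 : 1 + c ≤ (n:ℝ) ^ (r/(d:ℝ)) * 2 ^ r * (1 + P / V ^ (r/(d:ℝ))) := by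
      have hceq : (n:ℝ) ^ (r/(d:ℝ)) * 2 ^ r * (P / V ^ (r/(d:ℝ))) = c := by
        rw [hcdef]
        ring
      nlinarith
    have h2 := Real.log_le_log (by linarith) h1
    rw [Real.log_mul (by positivity) (by positivity),
      Real.log_mul (by positivity) (by positivity),
      Real.log_rpow hn0, Real.log_rpow two_pos] at h2
    linarith
  have hlog1P : 0 ≤ Real.log (1 + P / V ^ (r/(d:ℝ))) := by
    refine Real.log_nonneg ?_
    have : 0 < P / V ^ (r/(d:ℝ)) := div_pos hP (Real.rpow_pos_of_pos hVpos _)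
    linarith
  have hlog2 : Real.log 2 ≤ 1 := by
    have := Real.log_two_lt_d9
    linarith
  have hstep : F * V * T ≤ η * (r/(d:ℝ) * Real.log n) + η * (r * Real.log 2)
      + η * Real.log (1 + P / V ^ (r/(d:ℝ))) := by
    have := mul_le_mul_of_nonneg_left hTle hη0
    calc F * V * T = η * T := by rw [hηVF]; ring
      _ ≤ η * (r/(d:ℝ) * Real.log n + r * Real.log 2 + Real.log (1 + P / V ^ (r/(d:ℝ)))) := this
      _ = _ := by ring
  have hslack : η * (r * Real.log 2) + F * (V * (r / (d:ℝ))) ≤ 2 * η * r := by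
    have hFV : F * (V * (r / (d:ℝ))) = η * r * (1/(d:ℝ)) := by
      rw [hηVF]; ring
    have hd1 : 1/(d:ℝ) ≤ 1 := by
      rw [div_le_one hdpos]; exact hd'
    have hηr : 0 ≤ η * r := mul_nonneg hη0 hr
    have h1 : η * (r * Real.log 2) ≤ η * r * 1 := by
      rw [← mul_assoc]
      exact mul_le_mul_of_nonneg_left hlog2 hηr
    have h2 : η * r * (1/(d:ℝ)) ≤ η * r * 1 :=
      mul_le_mul_of_nonneg_left hd1 hηr
    rw [hFV]
    linarith
  have hfinal : F * V * T + F * (V * (r / (d:ℝ)))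
      ≤ η * r / (d:ℝ) * Real.log n + η * Real.log (1 + P / V ^ (r/(d:ℝ))) + 2 * η * r := by
    have h1 : η * (r/(d:ℝ) * Real.log n) = η * r / (d:ℝ) * Real.log n := by ring
    linarith [hstep, hslack]
  linarith [hfinal]
end

section
/- Let d ≥ 1 be an integer, let B be a real d×d matrix with determinant 1, let β > 0, and let Λ = {βBx : x ∈ ℤ^d}. For every real r > d there exists a constant K ≥ 1, independent of β, and a Lebesgue-null set A ⊂ ℝ^d such that for every u ∈ ℝ^d \ A one has Σ_{x∈Λ} ‖u − x‖^{−r} ≤ K · (inf_{x∈Λ} ‖u − x‖)^{−r}. -/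
open MeasureTheory Real
open scoped ENNReal BigOperators

/-- The lattice point `β B x` for an integer vector `x`, viewed in Euclidean space. -/
noncomputable def latticePt (d : ℕ) (B : Matrix (Fin d) (Fin d) ℝ) (β : ℝ)
    (x : Fin d → ℤ) : EuclideanSpace ℝ (Fin d) :=
  β • (WithLp.equiv 2 (Fin d → ℝ)).symm (B.mulVec fun i => (x i : ℝ))

noncomputable def intVec (d : ℕ) (x : Fin d → ℤ) : EuclideanSpace ℝ (Fin d) :=
  (WithLp.equiv 2 (Fin d → ℝ)).symm (fun i => (x i : ℝ))

lemma intVec_apply (d : ℕ) (x : Fin d → ℤ) (i : Fin d) : intVec d x i = (x i : ℝ) := rfl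

lemma abs_coord_le_norm {d : ℕ} (w : EuclideanSpace ℝ (Fin d)) (j : Fin d) : |w j| ≤ ‖w‖ := by
  rw [EuclideanSpace.norm_eq]
  rw [show |w j| = Real.sqrt (|w j| ^ 2) from (Real.sqrt_sq (abs_nonneg _)).symm]
  apply Real.sqrt_le_sqrt
  rw [sq_abs]
  calc (w j) ^ 2 ≤ ∑ i, (w i) ^ 2 :=
        Finset.single_le_sum (f := fun i => (w i) ^ 2) (fun i _ => sq_nonneg _) (Finset.mem_univ j)
    _ = ∑ i, ‖w i‖ ^ 2 := by simp [Real.norm_eq_abs, sq_abs]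

lemma summable_g {s : ℝ} (hs : 1 < s) :
    Summable (fun m : ℤ => (1 + |(m : ℝ)|) ^ (-s)) := by
  have h1 : Summable (fun m : ℤ => |(m : ℝ)| ^ (-s) + (if m = 0 then (1:ℝ) else 0)) := by
    refine (Real.summable_abs_int_rpow hs).add
      (summable_of_ne_finset_zero (s := {(0:ℤ)}) ?_)
    intro b hb
    simp only [Finset.mem_singleton] at hb
    simp [hb]
  refine Summable.of_nonneg_of_le (fun m => Real.rpow_nonneg (by positivity) _) (fun m => ?_) h1
  rcases eq_or_ne m 0 with rfl | hm
  · simp [Real.rpow_nonneg]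
  · have h2 : (1:ℝ) ≤ |(m : ℝ)| := by
      rw [← Int.cast_abs]
      exact_mod_cast Int.one_le_abs hm
    have := Real.rpow_le_rpow_of_nonpos (by linarith) (by linarith : |(m:ℝ)| ≤ 1 + |(m:ℝ)|)
      (neg_nonpos.mpr (le_of_lt (by linarith : (0:ℝ) < s)))
    simp only [if_neg hm, add_zero]
    exact this

lemma step2 {d : ℕ} (hd : 1 ≤ d) {r : ℝ} (hr : 0 < r)
    (v : EuclideanSpace ℝ (Fin d)) (n x : Fin d → ℤ)
    (hround : ∀ i, |v i - (n i : ℝ)| ≤ 1/2) (hx : x ≠ n) :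
    ‖v - intVec d x‖ ^ (-r) ≤
      (9/2 : ℝ) ^ r * ∏ i, (1 + |((x i - n i : ℤ) : ℝ)|) ^ (-(r / (d : ℝ))) := by
  set a := ‖v - intVec d x‖ with ha_def
  have hsub : ∀ i, (v - intVec d x) i = v i - (x i : ℝ) := fun i => rfl
  have hcoord : ∀ i, |v i - (x i : ℝ)| ≤ a := by
    intro i
    rw [← hsub i]
    exact abs_coord_le_norm _ i
  have ha : (1:ℝ)/2 ≤ a := by
    obtain ⟨j, hj⟩ := Function.ne_iff.mp hx
    have h1 : (1:ℝ) ≤ |((x j - n j : ℤ) : ℝ)| := by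
      exact_mod_cast Int.one_le_abs (sub_ne_zero.mpr hj)
    have h2 : |((x j : ℝ) - n j)| ≤ |v j - (x j : ℝ)| + |v j - (n j : ℝ)| := by
      have := abs_sub_abs_le_abs_sub ((x j : ℝ) - n j) 0
      calc |(x j : ℝ) - n j| = |((x j : ℝ) - v j) + (v j - n j)| := by ring_nf
        _ ≤ |(x j : ℝ) - v j| + |v j - (n j : ℝ)| := abs_add_le _ _
        _ = |v j - (x j : ℝ)| + |v j - (n j : ℝ)| := by rw [abs_sub_comm]
    have h3 : |((x j - n j : ℤ) : ℝ)| = |((x j : ℝ) - n j)| := by push_cast; ring_nf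
    have := hcoord j
    have := hround j
    rw [h3] at h1
    linarith
  have ha0 : 0 < a := by linarith
  have hfac : ∀ i, (1 + |((x i - n i : ℤ) : ℝ)|) ≤ (9/2) * a := by
    intro i
    have h3 : |((x i - n i : ℤ) : ℝ)| = |((x i : ℝ) - n i)| := by push_cast; ring_nf
    have h2 : |((x i : ℝ) - n i)| ≤ |v i - (x i : ℝ)| + |v i - (n i : ℝ)| := by
      calc |(x i : ℝ) - n i| = |((x i : ℝ) - v i) + (v i - n i)| := by ring_nf
        _ ≤ |(x i : ℝ) - v i| + |v i - (n i : ℝ)| := abs_add_le _ _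
        _ = |v i - (x i : ℝ)| + |v i - (n i : ℝ)| := by rw [abs_sub_comm]
    have := hcoord i
    have := hround i
    rw [h3]
    linarith
  set P := ∏ i, (1 + |((x i - n i : ℤ) : ℝ)|) with hP_def
  have hPpos : 0 < P := Finset.prod_pos (fun i _ => by positivity)
  have hP : P ≤ ((9/2) * a) ^ d := by
    calc P ≤ ∏ _i : Fin d, ((9/2) * a) :=
          Finset.prod_le_prod (fun i _ => by positivity) (fun i _ => hfac i)
      _ = ((9/2) * a) ^ d := by rw [Finset.prod_const, Finset.card_univ, Fintype.card_fin]
  have hd0 : (0:ℝ) < d := by exact_mod_cast hd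
  have key : (((9/2) * a) ^ d : ℝ) ^ (-(r / (d:ℝ))) ≤ P ^ (-(r / (d:ℝ))) :=
    Real.rpow_le_rpow_of_nonpos hPpos hP (neg_nonpos.mpr (by positivity))
  have heq : (((9/2) * a) ^ d : ℝ) ^ (-(r / (d:ℝ))) = ((9/2) * a) ^ (-r) := by
    rw [← Real.rpow_natCast ((9/2) * a) d, ← Real.rpow_mul (by positivity)]
    congr 1
    field_simp
  have heq2 : ((9/2 : ℝ) * a) ^ (-r) = (9/2 : ℝ) ^ (-r) * a ^ (-r) :=
    Real.mul_rpow (by norm_num) ha0.le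
  have hprod : ∏ i, (1 + |((x i - n i : ℤ) : ℝ)|) ^ (-(r / (d : ℝ))) = P ^ (-(r / (d:ℝ))) :=
    Real.finset_prod_rpow _ _ (fun i _ => by positivity) _
  rw [hprod]
  calc a ^ (-r) = (9/2 : ℝ) ^ r * ((9/2 : ℝ) ^ (-r) * a ^ (-r)) := by
        rw [← mul_assoc, ← Real.rpow_add (by norm_num : (0:ℝ) < 9/2)]
        simp
    _ = (9/2 : ℝ) ^ r * (((9/2) * a) ^ (-r)) := by rw [heq2]
    _ = (9/2 : ℝ) ^ r * ((((9/2) * a) ^ d : ℝ) ^ (-(r / (d:ℝ)))) := by rw [heq]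
    _ ≤ (9/2 : ℝ) ^ r * (P ^ (-(r / (d:ℝ)))) :=
        mul_le_mul_of_nonneg_left key (Real.rpow_nonneg (by norm_num) _)

lemma prod_sum_le (d : ℕ) {s : ℝ} (hs : 1 < s) (t : Finset (Fin d → ℤ)) :
    ∑ y ∈ t, ∏ i, (1 + |((y i : ℤ) : ℝ)|) ^ (-s) ≤
      (∑' m : ℤ, (1 + |(m : ℝ)|) ^ (-s)) ^ d := by
  classical
  set T := ∑' m : ℤ, (1 + |(m : ℝ)|) ^ (-s) with hT
  set u : Fin d → Finset ℤ := fun i => t.image (fun y => y i) with hu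
  have hsubset : t ⊆ Fintype.piFinset u := by
    intro y hy
    rw [Fintype.mem_piFinset]
    exact fun i => Finset.mem_image_of_mem _ hy
  calc ∑ y ∈ t, ∏ i, (1 + |((y i : ℤ) : ℝ)|) ^ (-s)
      ≤ ∑ y ∈ Fintype.piFinset u, ∏ i, (1 + |((y i : ℤ) : ℝ)|) ^ (-s) :=
        Finset.sum_le_sum_of_subset_of_nonneg hsubset
          (fun y _ _ => Finset.prod_nonneg (fun i _ => Real.rpow_nonneg (by positivity) _))
    _ = ∏ i : Fin d, ∑ m ∈ u i, (1 + |(m : ℝ)|) ^ (-s) :=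
        (Finset.prod_univ_sum u (fun _ m => (1 + |(m : ℝ)|) ^ (-s))).symm
    _ ≤ ∏ _i : Fin d, T :=
        Finset.prod_le_prod
          (fun i _ => Finset.sum_nonneg (fun m _ => Real.rpow_nonneg (by positivity) _))
          (fun i _ => (summable_g hs).sum_le_tsum (u i) (fun m _ => Real.rpow_nonneg (by positivity) _))
    _ = T ^ d := by rw [Finset.prod_const, Finset.card_univ, Fintype.card_fin]

lemma std_bound (d : ℕ) (hd : 1 ≤ d) (r : ℝ) (hr : (d : ℝ) < r) :
    ∃ C : ℝ, 1 ≤ C ∧ ∀ v : EuclideanSpace ℝ (Fin d), (∀ x : Fin d → ℤ, v ≠ intVec d x) →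
      0 < (⨅ x : Fin d → ℤ, ‖v - intVec d x‖) ∧
      ∀ s : Finset (Fin d → ℤ),
        ∑ x ∈ s, ‖v - intVec d x‖ ^ (-r) ≤
          C * (⨅ x : Fin d → ℤ, ‖v - intVec d x‖) ^ (-r) := by
  classical
  have hd0 : (0:ℝ) < d := by exact_mod_cast hd
  have hr0 : (0:ℝ) < r := lt_of_le_of_lt (by exact_mod_cast Nat.zero_le d) hr
  have hs : 1 < r / (d:ℝ) := (one_lt_div hd0).mpr hr
  set T := ∑' m : ℤ, (1 + |(m : ℝ)|) ^ (-(r / (d:ℝ))) with hT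
  have hT0 : 0 ≤ T := tsum_nonneg (fun m => Real.rpow_nonneg (by positivity) _)
  refine ⟨1 + (9/2 : ℝ) ^ r * T ^ d * (d : ℝ) ^ r, ?_, ?_⟩
  · have : 0 ≤ (9/2 : ℝ) ^ r * T ^ d * (d : ℝ) ^ r := by
      apply mul_nonneg
      apply mul_nonneg (Real.rpow_nonneg (by norm_num) _) (pow_nonneg hT0 _)
      exact Real.rpow_nonneg hd0.le _
    linarith
  intro v hv
  set n : Fin d → ℤ := fun i => round (v i) with hn
  have hround : ∀ i, |v i - (n i : ℝ)| ≤ 1/2 := fun i => abs_sub_round (v i)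
  have hsubap : ∀ (x : Fin d → ℤ) (i : Fin d), (v - intVec d x) i = v i - (x i : ℝ) :=
    fun x i => rfl
  have norm_vn : ‖v - intVec d n‖ ≤ (d : ℝ) := by
    rw [EuclideanSpace.norm_eq]
    have hsum : ∑ i, ‖(v - intVec d n) i‖ ^ 2 ≤ (d:ℝ)^2 := by
      calc ∑ i, ‖(v - intVec d n) i‖ ^ 2 ≤ ∑ _i : Fin d, (1/2:ℝ)^2 := by
            apply Finset.sum_le_sum
            intro i _
            rw [hsubap n i, Real.norm_eq_abs]
            have h := hround i
            have h0 := abs_nonneg (v i - (n i : ℝ))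
            nlinarith [h, h0]
        _ = (d:ℝ) * (1/4) := by
            rw [Finset.sum_const, Finset.card_univ, Fintype.card_fin]
            push_cast; ring
        _ ≤ (d:ℝ)^2 := by nlinarith [hd0, (by exact_mod_cast hd : (1:ℝ) ≤ (d:ℝ))]
    calc Real.sqrt (∑ i, ‖(v - intVec d n) i‖ ^ 2) ≤ Real.sqrt ((d:ℝ)^2) :=
          Real.sqrt_le_sqrt hsum
      _ = (d:ℝ) := Real.sqrt_sq hd0.le
  have bdd : BddBelow (Set.range fun x : Fin d → ℤ => ‖v - intVec d x‖) := by
    refine ⟨0, ?_⟩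
    rintro y ⟨x, rfl⟩
    exact norm_nonneg _
  set δ := ⨅ x : Fin d → ℤ, ‖v - intVec d x‖ with hδ
  have hδ_le_n : δ ≤ ‖v - intVec d n‖ := ciInf_le bdd n
  have hδd : δ ≤ (d:ℝ) := hδ_le_n.trans norm_vn
  -- positivity of δ
  set S' : Finset (Fin d → ℤ) := Finset.Icc (fun i => n i - d) (fun i => n i + d) with hS'
  have hnS : n ∈ S' := by
    rw [Finset.mem_Icc]
    constructor <;> intro i <;> dsimp only <;> omega
  have hS'ne : S'.Nonempty := ⟨n, hnS⟩
  have hm_pos : 0 < S'.inf' hS'ne (fun x => ‖v - intVec d x‖) := by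
    rw [Finset.lt_inf'_iff]
    intro x _
    rw [norm_sub_pos_iff]
    exact hv x
  have hm_le : ∀ x : Fin d → ℤ, S'.inf' hS'ne (fun x => ‖v - intVec d x‖) ≤ ‖v - intVec d x‖ := by
    intro x
    by_cases hx : x ∈ S'
    · exact Finset.inf'_le _ hx
    · have hj : ∃ j, x j < n j - d ∨ n j + d < x j := by
        by_contra h
        push_neg at h
        exact hx (Finset.mem_Icc.mpr ⟨fun j => by have := (h j).1; simp; omega,
          fun j => by have := (h j).2; simp; omega⟩)
      obtain ⟨j, hj⟩ := hj
      have hint : (d:ℝ) + 1 ≤ |((x j : ℝ) - (n j : ℝ))| := by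
        have : (d:ℤ) + 1 ≤ |x j - n j| := by
          rcases hj with h | h
          · refine le_trans (by omega : (d:ℤ) + 1 ≤ n j - x j) ?_
            rw [abs_sub_comm]
            exact le_abs_self _
          · exact le_trans (by omega : (d:ℤ) + 1 ≤ x j - n j) (le_abs_self _)
        calc (d:ℝ) + 1 = ((d + 1 : ℤ) : ℝ) := by push_cast; ring
          _ ≤ (|x j - n j| : ℤ) := by exact_mod_cast this
          _ = |((x j : ℝ) - (n j : ℝ))| := by rw [Int.cast_abs]; push_cast; ring_nf
      have h2 : |((x j : ℝ) - n j)| ≤ |v j - (x j : ℝ)| + |v j - (n j : ℝ)| := by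
        calc |(x j : ℝ) - n j| = |((x j : ℝ) - v j) + (v j - n j)| := by ring_nf
          _ ≤ |(x j : ℝ) - v j| + |v j - (n j : ℝ)| := abs_add_le _ _
          _ = |v j - (x j : ℝ)| + |v j - (n j : ℝ)| := by rw [abs_sub_comm]
      have h3 : |v j - (x j : ℝ)| ≤ ‖v - intVec d x‖ := by
        rw [← hsubap x j]; exact abs_coord_le_norm _ j
      have h4 := hround j
      have h5 : S'.inf' hS'ne (fun x => ‖v - intVec d x‖) ≤ ‖v - intVec d n‖ :=
        Finset.inf'_le _ hnS
      linarith
  have hδpos : 0 < δ := lt_of_lt_of_le hm_pos (le_ciInf hm_le)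
  refine ⟨hδpos, ?_⟩
  intro s
  have hf0 : ∀ x : Fin d → ℤ, 0 ≤ ‖v - intVec d x‖ ^ (-r) :=
    fun x => Real.rpow_nonneg (norm_nonneg _) _
  have hfn : ‖v - intVec d n‖ ^ (-r) ≤ δ ^ (-r) :=
    Real.rpow_le_rpow_of_nonpos hδpos hδ_le_n (neg_nonpos.mpr hr0.le)
  have hsplit : ∑ x ∈ s, ‖v - intVec d x‖ ^ (-r) ≤
      ‖v - intVec d n‖ ^ (-r) + ∑ x ∈ s.erase n, ‖v - intVec d x‖ ^ (-r) := by
    by_cases hns : n ∈ s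
    · exact le_of_eq (Finset.add_sum_erase s _ hns).symm
    · rw [Finset.erase_eq_of_notMem hns]
      exact le_add_of_nonneg_left (hf0 n)
  have htail : ∑ x ∈ s.erase n, ‖v - intVec d x‖ ^ (-r) ≤ (9/2 : ℝ) ^ r * T ^ d := by
    have step : ∑ x ∈ s.erase n, ‖v - intVec d x‖ ^ (-r) ≤
        ∑ x ∈ s.erase n, (9/2 : ℝ) ^ r * ∏ i, (1 + |((x i - n i : ℤ) : ℝ)|) ^ (-(r / (d:ℝ))) := by
      apply Finset.sum_le_sum
      intro x hx
      exact step2 hd hr0 v n x hround (Finset.ne_of_mem_erase hx)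
    rw [← Finset.mul_sum] at step
    have himg : ∑ x ∈ s.erase n, ∏ i, (1 + |((x i - n i : ℤ) : ℝ)|) ^ (-(r / (d:ℝ))) =
        ∑ y ∈ (s.erase n).image (fun x => x - n), ∏ i, (1 + |((y i : ℤ) : ℝ)|) ^ (-(r / (d:ℝ))) := by
      rw [Finset.sum_image]
      · rfl
      · intro a _ b _ hab
        have := congrArg (· + n) hab
        simpa using this
    have := prod_sum_le d hs ((s.erase n).image (fun x => x - n))
    calc ∑ x ∈ s.erase n, ‖v - intVec d x‖ ^ (-r)
        ≤ (9/2 : ℝ) ^ r * ∑ x ∈ s.erase n, ∏ i, (1 + |((x i - n i : ℤ) : ℝ)|) ^ (-(r / (d:ℝ))) :=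
          step
      _ = (9/2 : ℝ) ^ r *
            ∑ y ∈ (s.erase n).image (fun x => x - n), ∏ i, (1 + |((y i : ℤ) : ℝ)|) ^ (-(r / (d:ℝ))) := by
          rw [himg]
      _ ≤ (9/2 : ℝ) ^ r * T ^ d :=
          mul_le_mul_of_nonneg_left this (Real.rpow_nonneg (by norm_num) _)
  have hone : (1:ℝ) ≤ (d:ℝ) ^ r * δ ^ (-r) := by
    have hb : (1:ℝ) ≤ (d:ℝ) / δ := (one_le_div hδpos).mpr hδd
    have h1 : (1:ℝ) ≤ ((d:ℝ) / δ) ^ r := by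
      calc (1:ℝ) = ((d:ℝ)/δ) ^ (0:ℝ) := (Real.rpow_zero _).symm
        _ ≤ ((d:ℝ)/δ) ^ r := Real.rpow_le_rpow_of_exponent_le hb hr0.le
    have h2 : ((d:ℝ) / δ) ^ r = (d:ℝ) ^ r * δ ^ (-r) := by
      rw [Real.div_rpow hd0.le hδpos.le, Real.rpow_neg hδpos.le, div_eq_mul_inv]
    rwa [h2] at h1
  have hconst : (9/2 : ℝ) ^ r * T ^ d ≤ (9/2 : ℝ) ^ r * T ^ d * ((d:ℝ) ^ r * δ ^ (-r)) :=
    le_mul_of_one_le_right (mul_nonneg (Real.rpow_nonneg (by norm_num) _) (pow_nonneg hT0 _)) hone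
  calc ∑ x ∈ s, ‖v - intVec d x‖ ^ (-r)
      ≤ ‖v - intVec d n‖ ^ (-r) + ∑ x ∈ s.erase n, ‖v - intVec d x‖ ^ (-r) := hsplit
    _ ≤ δ ^ (-r) + (9/2 : ℝ) ^ r * T ^ d := add_le_add hfn htail
    _ ≤ δ ^ (-r) + (9/2 : ℝ) ^ r * T ^ d * ((d:ℝ) ^ r * δ ^ (-r)) := by linarith
    _ = (1 + (9/2 : ℝ) ^ r * T ^ d * (d : ℝ) ^ r) * δ ^ (-r) := by ring

theorem lattice_sum_le_const_mul_min (d : ℕ) (hd : 1 ≤ d)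
    (B : Matrix (Fin d) (Fin d) ℝ) (hB : B.det = 1) (r : ℝ) (hr : (d : ℝ) < r) :
    ∃ K : ℝ, 1 ≤ K ∧ ∀ β : ℝ, 0 < β →
      ∃ A : Set (EuclideanSpace ℝ (Fin d)), volume A = 0 ∧
        ∀ u ∉ A,
          (∑' x : Fin d → ℤ, ‖u - latticePt d B β x‖ ^ (-r)) ≤
            K * (⨅ x : Fin d → ℤ, ‖u - latticePt d B β x‖) ^ (-r) := by
  classical
  haveI : Nonempty (Fin d) := ⟨⟨0, hd⟩⟩
  have hr0 : (0:ℝ) < r := lt_of_le_of_lt (by exact_mod_cast Nat.zero_le d) hr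
  have hBu : IsUnit B := (Matrix.isUnit_iff_isUnit_det B).mpr (by rw [hB]; exact isUnit_one)
  set e₀ : EuclideanSpace ℝ (Fin d) →ₗ[ℝ] EuclideanSpace ℝ (Fin d) :=
    Matrix.toEuclideanLin B with he₀
  have he₀_apply : ∀ w : EuclideanSpace ℝ (Fin d),
      e₀ w = (WithLp.equiv 2 (Fin d → ℝ)).symm (B.mulVec (WithLp.equiv 2 (Fin d → ℝ) w)) :=
    fun w => Matrix.toEuclideanLin_apply B w
  have hmv : Function.Injective (B.mulVec : (Fin d → ℝ) → (Fin d → ℝ)) :=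
    Matrix.mulVec_injective_iff_isUnit.mpr hBu
  have hinj : Function.Injective e₀ := by
    intro w1 w2 h
    rw [he₀_apply, he₀_apply] at h
    have h2 := (WithLp.equiv 2 (Fin d → ℝ)).symm.injective h
    have h3 := hmv h2
    exact (WithLp.equiv 2 (Fin d → ℝ)).injective h3
  have hsurj : Function.Surjective e₀ := LinearMap.injective_iff_surjective.mp hinj
  set e := LinearEquiv.ofBijective e₀ ⟨hinj, hsurj⟩ with he
  set eC := e.toContinuousLinearEquiv with heC
  have heC_apply : ∀ w, eC w = e₀ w := fun w => rfl
  set c₂ : ℝ := max ‖(eC : EuclideanSpace ℝ (Fin d) →L[ℝ] EuclideanSpace ℝ (Fin d))‖ 1 with hc₂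
  set b : ℝ := max ‖(eC.symm : EuclideanSpace ℝ (Fin d) →L[ℝ] EuclideanSpace ℝ (Fin d))‖ 1 with hb
  have hc₂1 : (1:ℝ) ≤ c₂ := le_max_right _ _
  have hb1 : (1:ℝ) ≤ b := le_max_right _ _
  have hc₂0 : (0:ℝ) < c₂ := lt_of_lt_of_le one_pos hc₂1
  have hb0 : (0:ℝ) < b := lt_of_lt_of_le one_pos hb1
  have hup : ∀ w, ‖e₀ w‖ ≤ c₂ * ‖w‖ := by
    intro w
    calc ‖e₀ w‖ = ‖(eC : EuclideanSpace ℝ (Fin d) →L[ℝ] EuclideanSpace ℝ (Fin d)) w‖ := rfl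
      _ ≤ ‖(eC : EuclideanSpace ℝ (Fin d) →L[ℝ] EuclideanSpace ℝ (Fin d))‖ * ‖w‖ :=
          ContinuousLinearMap.le_opNorm _ w
      _ ≤ c₂ * ‖w‖ := mul_le_mul_of_nonneg_right (le_max_left _ _) (norm_nonneg _)
  have hlow : ∀ w, ‖w‖ ≤ b * ‖e₀ w‖ := by
    intro w
    calc ‖w‖ = ‖eC.symm (eC w)‖ := by rw [eC.symm_apply_apply]
      _ = ‖(eC.symm : EuclideanSpace ℝ (Fin d) →L[ℝ] EuclideanSpace ℝ (Fin d)) (eC w)‖ := rfl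
      _ ≤ ‖(eC.symm : EuclideanSpace ℝ (Fin d) →L[ℝ] EuclideanSpace ℝ (Fin d))‖ * ‖eC w‖ :=
          ContinuousLinearMap.le_opNorm _ _
      _ ≤ b * ‖e₀ w‖ := by
          rw [heC_apply]
          exact mul_le_mul_of_nonneg_right (le_max_left _ _) (norm_nonneg _)
  obtain ⟨C, hC1, hCstd⟩ := std_bound d hd r hr
  refine ⟨C * (b * c₂) ^ r, ?_, ?_⟩
  · have h1 : (1:ℝ) ≤ (b * c₂) ^ r := by
      calc (1:ℝ) = (b * c₂) ^ (0:ℝ) := (Real.rpow_zero _).symm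
        _ ≤ (b * c₂) ^ r := Real.rpow_le_rpow_of_exponent_le (one_le_mul_of_one_le_of_one_le hb1 hc₂1) hr0.le
    calc (1:ℝ) = 1 * 1 := (one_mul 1).symm
      _ ≤ C * (b * c₂) ^ r := mul_le_mul hC1 h1 zero_le_one (le_trans zero_le_one hC1)
  intro β hβ
  refine ⟨Set.range (latticePt d B β), (Set.countable_range _).measure_zero _, ?_⟩
  intro u hu
  set v : EuclideanSpace ℝ (Fin d) := e.symm (β⁻¹ • u) with hv_def
  have he₀v : e₀ v = β⁻¹ • u := e.apply_symm_apply (β⁻¹ • u)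
  have hlatt : ∀ x : Fin d → ℤ, latticePt d B β x = β • e₀ (intVec d x) := by
    intro x
    rw [he₀_apply]
    rfl
  have hkey : ∀ x : Fin d → ℤ, u - latticePt d B β x = β • e₀ (v - intVec d x) := by
    intro x
    rw [hlatt x, map_sub, smul_sub, he₀v, smul_smul, mul_inv_cancel₀ (ne_of_gt hβ), one_smul]
  have hnorm : ∀ x : Fin d → ℤ, ‖u - latticePt d B β x‖ = β * ‖e₀ (v - intVec d x)‖ := by
    intro x
    rw [hkey x, norm_smul, Real.norm_eq_abs, abs_of_pos hβ]
  have hvlat : ∀ x : Fin d → ℤ, v ≠ intVec d x := by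
    intro x hvx
    apply hu
    refine ⟨x, ?_⟩
    rw [hlatt x, ← hvx, he₀v, smul_smul, mul_inv_cancel₀ (ne_of_gt hβ), one_smul]
  obtain ⟨hδpos, hsum⟩ := hCstd v hvlat
  set δ := ⨅ x : Fin d → ℤ, ‖v - intVec d x‖ with hδ
  have bddZ : BddBelow (Set.range fun x : Fin d → ℤ => ‖v - intVec d x‖) := by
    refine ⟨0, ?_⟩; rintro y ⟨x, rfl⟩; exact norm_nonneg _
  have bddU : BddBelow (Set.range fun x : Fin d → ℤ => ‖u - latticePt d B β x‖) := by
    refine ⟨0, ?_⟩; rintro y ⟨x, rfl⟩; exact norm_nonneg _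
  have hnormpos : ∀ x : Fin d → ℤ, 0 < ‖v - intVec d x‖ :=
    fun x => norm_sub_pos_iff.mpr (hvlat x)
  have hlow' : ∀ x : Fin d → ℤ, (β * b⁻¹) * ‖v - intVec d x‖ ≤ ‖u - latticePt d B β x‖ := by
    intro x
    rw [hnorm x]
    have := hlow (v - intVec d x)
    rw [mul_assoc]
    apply mul_le_mul_of_nonneg_left _ hβ.le
    rw [inv_mul_le_iff₀ hb0]
    linarith [this]
  have hup' : ∀ x : Fin d → ℤ, ‖u - latticePt d B β x‖ ≤ (β * c₂) * ‖v - intVec d x‖ := by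
    intro x
    rw [hnorm x, mul_assoc]
    exact mul_le_mul_of_nonneg_left (hup _) hβ.le
  set infu := ⨅ x : Fin d → ℤ, ‖u - latticePt d B β x‖ with hinfu
  have hinfu_pos : 0 < infu := by
    have : (β * b⁻¹) * δ ≤ infu := by
      apply le_ciInf
      intro x
      calc (β * b⁻¹) * δ ≤ (β * b⁻¹) * ‖v - intVec d x‖ :=
            mul_le_mul_of_nonneg_left (ciInf_le bddZ x) (by positivity)
        _ ≤ ‖u - latticePt d B β x‖ := hlow' x
    have h0 : 0 < (β * b⁻¹) * δ := by positivity
    linarith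
  have hinfu_le : infu ≤ (β * c₂) * δ := by
    rw [← div_le_iff₀' (by positivity : (0:ℝ) < β * c₂)] at *
    apply le_ciInf
    intro x
    rw [div_le_iff₀' (by positivity : (0:ℝ) < β * c₂)]
    exact le_trans (ciInf_le bddU x) (hup' x)
  have hc2cancel : c₂ ^ r * c₂ ^ (-r) = 1 := by
    rw [← Real.rpow_add hc₂0]
    simp
  have hbinv : (b⁻¹) ^ (-r) = b ^ r := by
    rw [Real.inv_rpow hb0.le, Real.rpow_neg hb0.le, inv_inv]
  have hK0 : (0:ℝ) ≤ C * (b * c₂) ^ r :=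
    mul_nonneg (le_trans zero_le_one hC1) (Real.rpow_nonneg (by positivity) _)
  -- bound the tsum via finite sums
  apply tsum_le_of_sum_le'
  · exact mul_nonneg hK0 (Real.rpow_nonneg (le_ciInf (fun x => norm_nonneg _)) _)
  intro s
  have hterm : ∀ x ∈ s, ‖u - latticePt d B β x‖ ^ (-r) ≤
      ((β * b⁻¹) * ‖v - intVec d x‖) ^ (-r) := by
    intro x _
    exact Real.rpow_le_rpow_of_nonpos (by have := hnormpos x; positivity) (hlow' x)
      (neg_nonpos.mpr hr0.le)
  have hterm2 : ∀ x : Fin d → ℤ, ((β * b⁻¹) * ‖v - intVec d x‖) ^ (-r) =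
      (β * b⁻¹) ^ (-r) * ‖v - intVec d x‖ ^ (-r) :=
    fun x => Real.mul_rpow (by positivity) (norm_nonneg _)
  calc ∑ x ∈ s, ‖u - latticePt d B β x‖ ^ (-r)
      ≤ ∑ x ∈ s, (β * b⁻¹) ^ (-r) * ‖v - intVec d x‖ ^ (-r) := by
        apply Finset.sum_le_sum
        intro x hx
        rw [← hterm2 x]
        exact hterm x hx
    _ = (β * b⁻¹) ^ (-r) * ∑ x ∈ s, ‖v - intVec d x‖ ^ (-r) := by rw [Finset.mul_sum]
    _ ≤ (β * b⁻¹) ^ (-r) * (C * δ ^ (-r)) :=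
        mul_le_mul_of_nonneg_left (hsum s) (Real.rpow_nonneg (by positivity) _)
    _ = C * (b * c₂) ^ r * ((β * c₂) * δ) ^ (-r) := by
        rw [Real.mul_rpow hβ.le (by positivity : (0:ℝ) ≤ b⁻¹), hbinv]
        rw [Real.mul_rpow (by positivity : (0:ℝ) ≤ β * c₂) (le_of_lt hδpos),
          Real.mul_rpow hβ.le hc₂0.le, Real.mul_rpow hb0.le hc₂0.le]
        have : C * (b ^ r * c₂ ^ r) * (β ^ (-r) * c₂ ^ (-r) * δ ^ (-r)) =
            (c₂ ^ r * c₂ ^ (-r)) * (C * b ^ r * β ^ (-r) * δ ^ (-r)) := by ring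
        rw [this, hc2cancel, one_mul]
        ring
    _ ≤ C * (b * c₂) ^ r * infu ^ (-r) := by
        apply mul_le_mul_of_nonneg_left
        · exact Real.rpow_le_rpow_of_nonpos hinfu_pos hinfu_le (neg_nonpos.mpr hr0.le)
        · exact hK0
end

section
/- Let d ≥ 1 be an integer, let B be a real d×d matrix with determinant 1, let β > 0, and let Λ = {βBx : x ∈ ℤ^d}. The set A of points u ∈ ℝ^d that do not have a unique nearest lattice point (i.e., u ∈ Λ, or ‖u − x‖ = ‖u − y‖ = inf_{z∈Λ}‖u − z‖ for two distinct x, y ∈ Λ) is a Lebesgue-null set, and for every u ∈ ℝ^d \ A one has lim_{r→∞} (Σ_{x∈Λ} ‖u − x‖^{−r}) · (inf_{x∈Λ} ‖u − x‖)^{r} = 1. -/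
open MeasureTheory Real
open scoped ENNReal BigOperators

/-- The set of points that lie on the lattice or that do not have a unique
nearest lattice point. -/
noncomputable def badSet (d : ℕ) (B : Matrix (Fin d) (Fin d) ℝ) (β : ℝ) :
    Set (EuclideanSpace ℝ (Fin d)) :=
  {u | (∃ x : Fin d → ℤ, u = latticePt d B β x) ∨
    ∃ x y : Fin d → ℤ, x ≠ y ∧
      ‖u - latticePt d B β x‖ = (⨅ z : Fin d → ℤ, ‖u - latticePt d B β z‖) ∧
      ‖u - latticePt d B β y‖ = (⨅ z : Fin d → ℤ, ‖u - latticePt d B β z‖)}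

lemma aux_summable_int {s : ℝ} (hs : 1 < s) :
    Summable fun n : ℤ => (1 + |(n : ℝ)|) ^ (-s) := by
  refine ((Set.finite_singleton (0 : ℤ)).summable_compl_iff).mp ?_
  refine Summable.of_nonneg_of_le (fun n => Real.rpow_nonneg (by positivity) _)
    (fun n => ?_) ((Real.summable_abs_int_rpow hs).subtype _)
  have hn : (n : ℤ) ≠ 0 := n.2
  have h1 : (1:ℝ) ≤ |((n : ℤ) : ℝ)| := by
    exact_mod_cast Int.one_le_abs hn
  exact Real.rpow_le_rpow_of_nonpos (by linarith) (by linarith) (by linarith)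

lemma aux_summable_pi (d : ℕ) {g : ℤ → ℝ} (hg : Summable g) (hg0 : ∀ n, 0 ≤ g n) :
    Summable fun x : Fin d → ℤ => ∏ i, g (x i) := by
  induction d with
  | zero => exact .of_finite
  | succ n ih =>
    have key : Summable fun p : ℤ × (Fin n → ℤ) => g p.1 * ∏ i, g (p.2 i) := by
      apply summable_mul_of_summable_norm (f := g) (g := fun y : Fin n → ℤ => ∏ i, g (y i))
      · simpa [Real.norm_eq_abs, abs_of_nonneg, hg0] using hg.abs
      · refine ih.congr fun y => ?_
        rw [Real.norm_eq_abs, abs_of_nonneg (Finset.prod_nonneg fun i _ => hg0 _)]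
    rw [← (Fin.consEquiv (fun _ : Fin (n + 1) => ℤ)).summable_iff]
    refine key.congr fun p => ?_
    simp [Fin.consEquiv, Fin.prod_univ_succ]

lemma aux_norm_cast {d : ℕ} (x : Fin d → ℤ) :
    ‖(fun i => (x i : ℝ) : Fin d → ℝ)‖ = ‖x‖ := by
  have h : ∀ i, ‖(x i : ℝ)‖₊ = ‖x i‖₊ := fun i => by
    ext; simp [Int.norm_eq_abs]
  rw [Pi.norm_def, Pi.norm_def]
  simp only [h]

lemma aux_abs_le {d : ℕ} (x : Fin d → ℤ) (i : Fin d) : |(x i : ℝ)| ≤ ‖x‖ := by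
  have := norm_le_pi_norm x i
  rwa [Int.norm_eq_abs] at this

lemma aux_growth (d : ℕ) (B : Matrix (Fin d) (Fin d) ℝ) (hB : B.det = 1) (β : ℝ) (hβ : 0 < β) :
    ∃ c > 0, ∀ x : Fin d → ℤ, c * ‖x‖ ≤ ‖latticePt d B β x‖ := by
  haveI : Invertible B := B.invertibleOfIsUnitDet (by rw [hB]; exact isUnit_one)
  set f : (Fin d → ℝ) →ₗ[ℝ] EuclideanSpace ℝ (Fin d) :=
    ((WithLp.linearEquiv 2 ℝ (Fin d → ℝ)).symm.toLinearMap).comp B.mulVecLin with hf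
  have hker : LinearMap.ker f = ⊥ := by
    rw [LinearMap.ker_eq_bot]
    exact (WithLp.linearEquiv 2 ℝ (Fin d → ℝ)).symm.injective.comp
      (Matrix.mulVec_injective_of_invertible B)
  obtain ⟨K, hK0, hK⟩ := f.exists_antilipschitzWith hker
  have hKpos : (0:ℝ) < K := hK0
  refine ⟨β / K, div_pos hβ hKpos, fun x => ?_⟩
  have h1 : ‖x‖ ≤ K * ‖f (fun i => (x i : ℝ))‖ := by
    have h := hK.le_mul_dist (fun i => (x i : ℝ)) 0
    rw [dist_eq_norm, dist_eq_norm, sub_zero, map_zero, sub_zero, aux_norm_cast] at h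
    exact h
  have h2 : ‖latticePt d B β x‖ = β * ‖f (fun i => (x i : ℝ))‖ := by
    unfold latticePt
    rw [norm_smul, Real.norm_eq_abs, abs_of_pos hβ]
    rfl
  rw [h2]
  calc β / K * ‖x‖ ≤ β / K * (K * ‖f (fun i => (x i : ℝ))‖) :=
        mul_le_mul_of_nonneg_left h1 (le_of_lt (div_pos hβ hKpos))
    _ = β * ‖f (fun i => (x i : ℝ))‖ := by field_simp

lemma aux_finite (d : ℕ) (M : ℝ) : {x : Fin d → ℤ | ‖x‖ ≤ M}.Finite := by
  refine (Set.finite_Icc (fun _ : Fin d => -⌈M⌉) (fun _ => ⌈M⌉)).subset fun x hx => ?_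
  simp only [Set.mem_setOf_eq] at hx
  refine Set.mem_Icc.mpr ⟨fun i => ?_, fun i => ?_⟩ <;>
  · have h1 : |(x i : ℝ)| ≤ M := (aux_abs_le x i).trans hx
    have h2 : |x i| ≤ ⌈M⌉ := by
      have := h1.trans (Int.le_ceil M)
      exact_mod_cast (by exact_mod_cast this : ((|x i| : ℤ) : ℝ) ≤ (⌈M⌉ : ℝ))
    have := abs_le.mp h2
    simp only [Pi.neg_apply]
    omega

lemma aux_summable_main (d : ℕ) (hd : 1 ≤ d) (B : Matrix (Fin d) (Fin d) ℝ) (hB : B.det = 1)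
    (β : ℝ) (hβ : 0 < β) (u : EuclideanSpace ℝ (Fin d)) {r : ℝ} (hr : (d : ℝ) < r) :
    Summable fun x : Fin d → ℤ => ‖u - latticePt d B β x‖ ^ (-r) := by
  obtain ⟨c, hc, hgrow⟩ := aux_growth d B hB β hβ
  have hd0 : (0:ℝ) < d := by exact_mod_cast hd
  have hr0 : (0:ℝ) < r := lt_of_le_of_lt (by positivity) hr
  set s : ℝ := r / d with hs_def
  have hs : 1 < s := (one_lt_div hd0).mpr hr
  have hSfin : {x : Fin d → ℤ | c * ‖x‖ ≤ 2 * (‖u‖ + 1)}.Finite := by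
    refine (aux_finite d (2 * (‖u‖ + 1) / c)).subset fun x hx => ?_
    simp only [Set.mem_setOf_eq] at hx ⊢
    rw [le_div_iff₀ hc]; linarith
  refine (hSfin.summable_compl_iff).mp ?_
  have bound : Summable fun x : Fin d → ℤ =>
      ((c / 2) ^ (-r) * 2 ^ r) * ∏ i, (1 + |(x i : ℝ)|) ^ (-s) :=
    (aux_summable_pi d (aux_summable_int hs)
      (fun n => Real.rpow_nonneg (by positivity) _)).mul_left _
  refine Summable.of_nonneg_of_le (fun z => Real.rpow_nonneg (norm_nonneg _) _)
    (fun z => ?_) (bound.subtype _)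
  obtain ⟨x, hxS⟩ := z
  simp only [Set.mem_compl_iff, Set.mem_setOf_eq, not_le] at hxS
  have hxnorm0 : (0:ℝ) ≤ ‖x‖ := norm_nonneg _
  have hx1 : (1:ℝ) ≤ ‖x‖ := by
    have hxne : x ≠ 0 := by
      intro h
      rw [h] at hxS
      simp only [norm_zero, mul_zero] at hxS
      nlinarith [norm_nonneg u]
    obtain ⟨i, hi⟩ := Function.ne_iff.mp hxne
    have h1 : (1:ℝ) ≤ |(x i : ℝ)| := by exact_mod_cast Int.one_le_abs (by simpa using hi)
    exact h1.trans (aux_abs_le x i)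
  have hxpos : (0:ℝ) < ‖x‖ := by linarith
  have hdist : c / 2 * ‖x‖ ≤ ‖u - latticePt d B β x‖ := by
    have h1 := hgrow x
    have h2 : ‖latticePt d B β x‖ - ‖u‖ ≤ ‖u - latticePt d B β x‖ := by
      rw [norm_sub_rev]
      exact norm_sub_norm_le _ _
    linarith
  have step1 : ‖u - latticePt d B β x‖ ^ (-r) ≤ (c / 2 * ‖x‖) ^ (-r) :=
    Real.rpow_le_rpow_of_nonpos (by positivity) hdist (by linarith)
  have step2 : (c / 2 * ‖x‖) ^ (-r) = (c / 2) ^ (-r) * ‖x‖ ^ (-r) :=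
    Real.mul_rpow (by positivity) hxnorm0
  have hprod_pos : (0:ℝ) < ∏ i, (1 + |(x i : ℝ)|) :=
    Finset.prod_pos fun i _ => by positivity
  have hprod : ∏ i, (1 + |(x i : ℝ)|) ≤ (2 * ‖x‖) ^ d := by
    calc ∏ i, (1 + |(x i : ℝ)|) ≤ ∏ _i : Fin d, (2 * ‖x‖) := by
          refine Finset.prod_le_prod (fun i _ => by positivity) fun i _ => ?_
          have := aux_abs_le x i
          linarith
      _ = (2 * ‖x‖) ^ d := by
          rw [Finset.prod_const, Finset.card_univ, Fintype.card_fin]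
  have step3 : ‖x‖ ^ (-r) ≤ 2 ^ r * ∏ i, (1 + |(x i : ℝ)|) ^ (-s) := by
    have h4 : ((2 * ‖x‖) ^ d : ℝ) ^ (-s) ≤ (∏ i, (1 + |(x i : ℝ)|)) ^ (-s) :=
      Real.rpow_le_rpow_of_nonpos hprod_pos hprod (by linarith)
    have h5 : ((2 * ‖x‖) ^ d : ℝ) ^ (-s) = (2 * ‖x‖) ^ (-r) := by
      rw [← Real.rpow_natCast (2 * ‖x‖) d, ← Real.rpow_mul (by positivity)]
      congr 1
      rw [hs_def, mul_neg, mul_div_cancel₀ r hd0.ne']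
    have h6 : (∏ i, (1 + |(x i : ℝ)|)) ^ (-s) = ∏ i, (1 + |(x i : ℝ)|) ^ (-s) :=
      (Real.finset_prod_rpow Finset.univ (fun i => 1 + |(x i : ℝ)|) (fun i _ => by positivity) (-s)).symm
    have h7 : (2 * ‖x‖ : ℝ) ^ (-r) = 2 ^ (-r) * ‖x‖ ^ (-r) :=
      Real.mul_rpow (by norm_num) hxnorm0
    have h8 : (2:ℝ) ^ r * 2 ^ (-r) = 1 := by
      rw [← Real.rpow_add (by norm_num)]
      simp
    calc ‖x‖ ^ (-r) = 2 ^ r * ((2 * ‖x‖) ^ (-r)) := by rw [h7]; rw [← mul_assoc, h8, one_mul]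
      _ ≤ 2 ^ r * (∏ i, (1 + |(x i : ℝ)|)) ^ (-s) := by
          rw [← h5]
          exact mul_le_mul_of_nonneg_left h4 (Real.rpow_nonneg (by norm_num) _)
      _ = 2 ^ r * ∏ i, (1 + |(x i : ℝ)|) ^ (-s) := by rw [h6]
  calc ‖u - latticePt d B β x‖ ^ (-r) ≤ (c / 2) ^ (-r) * ‖x‖ ^ (-r) := by
        rw [← step2]; exact step1
    _ ≤ (c / 2) ^ (-r) * (2 ^ r * ∏ i, (1 + |(x i : ℝ)|) ^ (-s)) :=
        mul_le_mul_of_nonneg_left step3 (Real.rpow_nonneg (by positivity) _)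
    _ = ((c / 2) ^ (-r) * 2 ^ r) * ∏ i, (1 + |(x i : ℝ)|) ^ (-s) := by ring

lemma aux_inf (d : ℕ) (B : Matrix (Fin d) (Fin d) ℝ) (hB : B.det = 1) (β : ℝ) (hβ : 0 < β)
    (u : EuclideanSpace ℝ (Fin d)) (hu : u ∉ badSet d B β) :
    ∃ x₀ : Fin d → ℤ,
      (⨅ z : Fin d → ℤ, ‖u - latticePt d B β z‖) = ‖u - latticePt d B β x₀‖ ∧
      0 < ‖u - latticePt d B β x₀‖ ∧
      ∀ z : Fin d → ℤ, z ≠ x₀ → ‖u - latticePt d B β x₀‖ < ‖u - latticePt d B β z‖ := by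
  obtain ⟨c, hc, hgrow⟩ := aux_growth d B hB β hβ
  set g : (Fin d → ℤ) → ℝ := fun z => ‖u - latticePt d B β z‖ with hg
  have hbdd : BddBelow (Set.range g) := ⟨0, by rintro y ⟨z, rfl⟩; exact norm_nonneg _⟩
  have hTfin : {x : Fin d → ℤ | g x ≤ g 0}.Finite := by
    refine (aux_finite d ((g 0 + ‖u‖) / c)).subset fun x hx => ?_
    simp only [Set.mem_setOf_eq] at hx ⊢
    rw [le_div_iff₀ hc, mul_comm]
    have h1 := hgrow x
    have h2 : ‖latticePt d B β x‖ - ‖u‖ ≤ g x := by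
      rw [hg]
      simp only [norm_sub_rev u]
      exact norm_sub_norm_le _ _
    linarith
  obtain ⟨x₀, hx₀T, hmin⟩ := Set.exists_min_image _ g hTfin ⟨0, by simp⟩
  have hle : ∀ z, g x₀ ≤ g z := by
    intro z
    by_cases hz : g z ≤ g 0
    · exact hmin z hz
    · push_neg at hz
      exact le_trans (hmin 0 (by simp)) hz.le
  have hinf : (⨅ z : Fin d → ℤ, g z) = g x₀ :=
    le_antisymm (ciInf_le hbdd x₀) (le_ciInf hle)
  have hpos : 0 < g x₀ := by
    rcases (norm_nonneg (u - latticePt d B β x₀)).lt_or_eq with h | h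
    · exact h
    · exfalso
      apply hu
      left
      exact ⟨x₀, by rw [← sub_eq_zero]; exact (norm_eq_zero.mp h.symm)⟩
  refine ⟨x₀, hinf, hpos, fun z hz => ?_⟩
  rcases (hle z).lt_or_eq with h | h
  · exact h
  · exfalso
    apply hu
    right
    exact ⟨z, x₀, hz, by rw [hinf, hg]; exact h.symm, by rw [hinf]⟩

lemma latticePt_sub (d : ℕ) (B : Matrix (Fin d) (Fin d) ℝ) (β : ℝ) (x y : Fin d → ℤ) :
    latticePt d B β x - latticePt d B β y = latticePt d B β (x - y) := by
  unfold latticePt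
  have hxy : (fun i => (((x - y) i : ℤ) : ℝ)) = (fun i => ((x i : ℤ) : ℝ)) - fun i => ((y i : ℤ) : ℝ) := by
    funext i
    simp only [Pi.sub_apply]
    push_cast
    ring
  rw [hxy, ← smul_sub, Matrix.mulVec_sub]; rfl

theorem lattice_sum_asymptotic (d : ℕ) (hd : 1 ≤ d)
    (B : Matrix (Fin d) (Fin d) ℝ) (hB : B.det = 1) (β : ℝ) (hβ : 0 < β) :
    volume (badSet d B β) = 0 ∧
      ∀ u ∉ badSet d B β,
        Filter.Tendsto
          (fun r : ℝ => (∑' x : Fin d → ℤ, ‖u - latticePt d B β x‖ ^ (-r)) *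
            (⨅ x : Fin d → ℤ, ‖u - latticePt d B β x‖) ^ r)
          Filter.atTop (nhds 1) := by
  haveI : Nonempty (Fin d) := Fin.pos_iff_nonempty.mp hd
  obtain ⟨c, hc, hgrow⟩ := aux_growth d B hB β hβ
  have hinj : ∀ x y : Fin d → ℤ, x ≠ y → latticePt d B β x ≠ latticePt d B β y := by
    intro x y hxy h
    have h0 : latticePt d B β (x - y) = 0 := by rw [← latticePt_sub, h, sub_self]
    have h1 := hgrow (x - y)
    rw [h0, norm_zero] at h1
    have h2 : (0:ℝ) < ‖x - y‖ := norm_pos_iff.mpr (sub_ne_zero.mpr hxy)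
    nlinarith
  constructor
  · have hsub : badSet d B β ⊆
        (⋃ x : Fin d → ℤ,
          (affineSpan ℝ ({latticePt d B β x} : Set (EuclideanSpace ℝ (Fin d))) :
            Set (EuclideanSpace ℝ (Fin d)))) ∪
        ⋃ x : Fin d → ℤ, ⋃ y : Fin d → ℤ, ⋃ _h : x ≠ y,
          (AffineSubspace.perpBisector (latticePt d B β x) (latticePt d B β y) :
            Set (EuclideanSpace ℝ (Fin d))) := by
      rintro u (⟨x, hx⟩ | ⟨x, y, hxy, h1, h2⟩)
      · refine Or.inl (Set.mem_iUnion.mpr ⟨x, ?_⟩)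
        rw [AffineSubspace.coe_affineSpan_singleton]
        exact hx
      · refine Or.inr (Set.mem_iUnion.mpr ⟨x, Set.mem_iUnion.mpr ⟨y,
          Set.mem_iUnion.mpr ⟨hxy, ?_⟩⟩⟩)
        refine AffineSubspace.mem_perpBisector_iff_dist_eq.mpr ?_
        rw [dist_eq_norm, dist_eq_norm, h1, h2]
    refine measure_mono_null hsub (measure_union_null ?_ ?_)
    · refine measure_iUnion_null fun x => Measure.addHaar_affineSubspace _ _ ?_
      intro h
      obtain ⟨q, hq⟩ := exists_ne (latticePt d B β x)
      have : q ∈ affineSpan ℝ ({latticePt d B β x} : Set (EuclideanSpace ℝ (Fin d))) := by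
        rw [h]; trivial
      exact hq ((AffineSubspace.mem_affineSpan_singleton _ _).mp this)
    · refine measure_iUnion_null fun x => measure_iUnion_null fun y =>
        measure_iUnion_null fun hxy => Measure.addHaar_affineSubspace _ _ ?_
      intro h
      exact hinj x y hxy (AffineSubspace.perpBisector_eq_top.mp h)
  · intro u hu
    obtain ⟨x₀, hinf, hm, hstrict⟩ := aux_inf d B hB β hβ u hu
    set g : (Fin d → ℤ) → ℝ := fun z => ‖u - latticePt d B β z‖ with hg
    have hgpos : ∀ z, 0 < g z := fun z => by
      rcases eq_or_ne z x₀ with rfl | h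
      · exact hm
      · exact hm.trans (hstrict z h)
    have hgle : ∀ z, g x₀ ≤ g z := fun z => by
      rcases eq_or_ne z x₀ with rfl | h
      · exact le_refl _
      · exact (hstrict z h).le
    have heq : (fun r : ℝ => (∑' x : Fin d → ℤ, g x ^ (-r)) * (⨅ x : Fin d → ℤ, g x) ^ r)
        = fun r : ℝ => ∑' x : Fin d → ℤ, (g x₀ / g x) ^ r := by
      funext r
      rw [hinf, ← tsum_mul_right]
      refine tsum_congr fun z => ?_
      rw [Real.div_rpow hm.le (norm_nonneg _), Real.rpow_neg (norm_nonneg _),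
        div_eq_mul_inv, mul_comm]
    rw [heq]
    have hlim : Filter.Tendsto (fun r : ℝ => ∑' x : Fin d → ℤ, (g x₀ / g x) ^ r) Filter.atTop
        (nhds (∑' x : Fin d → ℤ, if x = x₀ then (1:ℝ) else 0)) := by
      apply tendsto_tsum_of_dominated_convergence
        (bound := fun z => (g x₀ / g z) ^ ((d:ℝ) + 1))
      · have hs : Summable fun z : Fin d → ℤ => ‖u - latticePt d B β z‖ ^ (-((d:ℝ)+1)) :=
          aux_summable_main d hd B hB β hβ u (lt_add_one _)
        refine ((hs.mul_left (g x₀ ^ ((d:ℝ)+1))).congr fun z => ?_)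
        rw [Real.div_rpow hm.le (norm_nonneg _), Real.rpow_neg (norm_nonneg _),
          div_eq_mul_inv]
      · intro z
        rcases eq_or_ne z x₀ with rfl | h
        · simp only [if_pos rfl, div_self (hgpos z).ne']
          simpa [Real.one_rpow] using
            (tendsto_const_nhds : Filter.Tendsto (fun _ : ℝ => (1:ℝ)) Filter.atTop (nhds 1))
        · rw [if_neg h]
          apply tendsto_rpow_atTop_of_base_lt_one
          · have := div_pos hm (hgpos z)
            linarith
          · exact (div_lt_one (hgpos z)).mpr (hstrict z h)
      · filter_upwards [Filter.eventually_ge_atTop ((d:ℝ)+1)] with r hr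
        intro z
        have h01 : 0 < g x₀ / g z := div_pos hm (hgpos z)
        have hle1 : g x₀ / g z ≤ 1 := (div_le_one (hgpos z)).mpr (hgle z)
        rw [Real.norm_eq_abs, abs_of_nonneg (Real.rpow_nonneg h01.le _)]
        exact Real.rpow_le_rpow_of_exponent_ge h01 hle1 hr
    have h1 : (∑' x : Fin d → ℤ, if x = x₀ then (1:ℝ) else 0) = 1 := tsum_ite_eq x₀ (fun _ => (1:ℝ))
    rwa [h1] at hlim
end

section
/- One has liminf_{n→∞} R_n / log n ≥ max(r/d − 1, 0). -/
open MeasureTheory Real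
open scoped ENNReal BigOperators

/-- Grid point in `[0,M]^d` with `k` subdivisions per axis. -/
noncomputable def gridPt (d k : ℕ) (M : ℝ) (j : Fin d → Fin k) : EuclideanSpace ℝ (Fin d) :=
  WithLp.toLp 2 (fun i => M * (2 * (j i : ℝ) + 1) / (2 * k))

lemma coord_approx {M : ℝ} (hM : 0 < M) {k : ℕ} (hk : 1 ≤ k) {t : ℝ}
    (ht : t ∈ Set.Icc 0 M) :
    ∃ a : Fin k, |t - M * (2 * (a : ℝ) + 1) / (2 * k)| ≤ M / (2 * k) := by
  have hk0 : (0:ℝ) < k := by exact_mod_cast hk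
  set s : ℝ := t * k / M with hs
  have hs0 : 0 ≤ s := by
    apply div_nonneg (mul_nonneg ht.1 hk0.le) hM.le
  set a0 : ℕ := min ⌊s⌋₊ (k - 1) with ha0
  have ha0lt : a0 < k := lt_of_le_of_lt (min_le_right _ _) (by omega)
  refine ⟨⟨a0, ha0lt⟩, ?_⟩
  have h1 : (a0 : ℝ) ≤ s := by
    have : (a0 : ℝ) ≤ (⌊s⌋₊ : ℝ) := by exact_mod_cast min_le_left _ _
    exact this.trans (Nat.floor_le hs0)
  have h2 : s ≤ (a0 : ℝ) + 1 := by
    rcases le_or_gt ⌊s⌋₊ (k - 1) with h | h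
    · have : a0 = ⌊s⌋₊ := min_eq_left h
      rw [this]
      exact (Nat.lt_floor_add_one s).le
    · have ha : a0 = k - 1 := min_eq_right h.le
      have hsk : s ≤ k := by
        rw [hs, div_le_iff₀ hM]
        calc t * k ≤ M * k := by nlinarith [ht.2]
          _ = k * M := by ring
      rw [ha]
      have : ((k - 1 : ℕ) : ℝ) = (k : ℝ) - 1 := by
        have := Nat.cast_sub hk (R := ℝ)
        simpa using this
      rw [this]; linarith
  have ht' : t = M * s / k := by
    rw [hs]; field_simp
  have key : t - M * (2 * ((⟨a0, ha0lt⟩ : Fin k) : ℝ) + 1) / (2 * k)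
      = M / (2 * k) * (2 * s - (2 * a0 + 1)) := by
    rw [ht']; field_simp
  rw [key, abs_mul, abs_of_nonneg (by positivity : (0:ℝ) ≤ M / (2*k))]
  have habs : |2 * s - (2 * (a0:ℝ) + 1)| ≤ 1 := by
    rw [abs_le]; constructor <;> linarith
  calc M / (2*k) * |2 * s - (2 * (a0:ℝ) + 1)| ≤ M / (2*k) * 1 := by
        apply mul_le_mul_of_nonneg_left habs (by positivity)
    _ = M / (2*k) := mul_one _

lemma grid_cover (d : ℕ) (hd : 1 ≤ d) {M : ℝ} (hM : 0 < M) {k : ℕ} (hk : 1 ≤ k)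
    (u : EuclideanSpace ℝ (Fin d)) (hu : ∀ i, u i ∈ Set.Icc (0:ℝ) M) :
    ∃ j : Fin d → Fin k, ‖u - gridPt d k M j‖ ≤ d * M / k := by
  have hk0 : (0:ℝ) < k := by exact_mod_cast hk
  have hd0 : (1:ℝ) ≤ d := by exact_mod_cast hd
  choose j hj using fun i => coord_approx hM hk (hu i)
  refine ⟨j, ?_⟩
  rw [EuclideanSpace.norm_eq]
  have hterm : ∀ i, ‖(u - gridPt d k M j) i‖ ^ 2 ≤ (M / (2*k)) ^ 2 := by
    intro i
    have : (u - gridPt d k M j) i = u i - M * (2 * (j i : ℝ) + 1) / (2 * k) := by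
      simp [gridPt, PiLp.sub_apply]
    rw [this, Real.norm_eq_abs, sq_abs]
    have := hj i
    nlinarith [abs_nonneg (u i - M * (2 * (j i : ℝ) + 1) / (2 * k)), sq_abs (u i - M * (2 * (j i : ℝ) + 1) / (2 * k))]
  have hsum : ∑ i, ‖(u - gridPt d k M j) i‖ ^ 2 ≤ (d * M / k) ^ 2 := by
    calc ∑ i, ‖(u - gridPt d k M j) i‖ ^ 2 ≤ ∑ _i : Fin d, (M / (2*k)) ^ 2 :=
          Finset.sum_le_sum (fun i _ => hterm i)
      _ = (d : ℝ) * (M / (2*k)) ^ 2 := by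
          rw [Finset.sum_const, Finset.card_univ, Fintype.card_fin, nsmul_eq_mul]
      _ ≤ (d * M / k) ^ 2 := by
          have hq : (0:ℝ) ≤ M ^ 2 / (k:ℝ) ^ 2 := by positivity
          have e1 : (d:ℝ) * (M / (2 * (k:ℝ))) ^ 2 = ((d:ℝ) / 4) * (M ^ 2 / (k:ℝ) ^ 2) := by
            field_simp; ring
          have e2 : ((d:ℝ) * M / (k:ℝ)) ^ 2 = ((d:ℝ) ^ 2) * (M ^ 2 / (k:ℝ) ^ 2) := by
            field_simp
          rw [e1, e2]
          apply mul_le_mul_of_nonneg_right _ hq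
          nlinarith
  calc √(∑ i, ‖(u - gridPt d k M j) i‖ ^ 2) ≤ √((d * M / k) ^ 2) :=
        Real.sqrt_le_sqrt hsum
    _ = d * M / k := Real.sqrt_sq (by positivity)

set_option maxHeartbeats 1000000 in
theorem macromultiplexing_liminf_lower_bound (d : ℕ) (hd : 1 ≤ d) (M P r : ℝ)
    (hM : 0 < M) (hP : 0 < P) (hr : 0 ≤ r)
    (S : Set (EuclideanSpace ℝ (Fin d))) (hSmeas : MeasurableSet S)
    (hSsub : S ⊆ {u : EuclideanSpace ℝ (Fin d) | ∀ i, u i ∈ Set.Icc (0 : ℝ) M})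
    (f : EuclideanSpace ℝ (Fin d) → ℝ) (hf0 : ∀ u, 0 ≤ f u)
    (hfS : ∀ u ∉ S, f u = 0) (hf1 : (∫ u in S, f u) = 1) :
    ENNReal.ofReal (max (r / d - 1) 0) ≤
      Filter.liminf
        (fun n : ℕ => optRate d n P r S f / ENNReal.ofReal (Real.log n))
        Filter.atTop := by
  haveI : Nonempty (Fin d) := ⟨⟨0, hd⟩⟩
  rcases le_or_gt (r / d - 1) 0 with ha | ha
  · simp [max_eq_right ha]
  rw [max_eq_left ha.le]
  set a : ℝ := r / d - 1 with ha_def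
  have hd0 : (0:ℝ) < d := by exact_mod_cast hd
  -- integrability of f
  have hint : IntegrableOn f S volume := by
    by_contra h
    rw [MeasureTheory.integral_undef h] at hf1
    norm_num at hf1
  have hlf : (∫⁻ u in S, ENNReal.ofReal (f u)) = 1 := by
    rw [← ofReal_integral_eq_lintegral_ofReal hint (ae_of_all _ hf0), hf1,
      ENNReal.ofReal_one]
  -- define grid parameter
  set kk : ℕ → ℕ := fun n => ⌊(n:ℝ) ^ ((d:ℝ)⁻¹)⌋₊ with hkk
  -- Claim 1 : lower bound on optRate
  have claim1 : ∀ n : ℕ, 1 ≤ n →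
      ENNReal.ofReal (Real.log (1 + (P / n) * ((d * M / kk n) ^ (-r)))) ≤
        optRate d n P r S f := by
    intro n hn
    have hn0 : (0:ℝ) < n := by exact_mod_cast hn
    have hk1 : 1 ≤ kk n := by
      apply Nat.le_floor
      rw [Nat.cast_one]
      calc (1:ℝ) = 1 ^ ((d:ℝ)⁻¹) := (Real.one_rpow _).symm
        _ ≤ (n:ℝ) ^ ((d:ℝ)⁻¹) := by
            apply Real.rpow_le_rpow (by norm_num) (by exact_mod_cast hn) (by positivity)
    have hkpos : (0:ℝ) < kk n := by exact_mod_cast hk1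
    have hkd : kk n ^ d ≤ n := by
      have h1 : ((kk n : ℝ)) ^ d ≤ ((n:ℝ) ^ ((d:ℝ)⁻¹)) ^ d :=
        pow_le_pow_left₀ (by positivity) (Nat.floor_le (by positivity)) d
      have h2 : ((n:ℝ) ^ ((d:ℝ)⁻¹)) ^ d = n := by
        rw [← Real.rpow_natCast ((n:ℝ) ^ ((d:ℝ)⁻¹)) d, ← Real.rpow_mul hn0.le,
          inv_mul_cancel₀ (by positivity : (d:ℝ) ≠ 0), Real.rpow_one]
      have : ((kk n ^ d : ℕ) : ℝ) ≤ (n : ℝ) := by push_cast; rw [h2] at h1; exact h1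
      exact_mod_cast this
    have hkdpos : 0 < kk n ^ d := pow_pos hk1 d
    -- the deployment
    set e : (Fin d → Fin (kk n)) ≃ Fin (kk n ^ d) :=
      Fintype.equivFinOfCardEq (by simp) with he
    set X : Fin n → EuclideanSpace ℝ (Fin d) :=
      fun i => gridPt d (kk n) M (e.symm ⟨(i : ℕ) % kk n ^ d, Nat.mod_lt _ hkdpos⟩) with hX
    have hXsurj : ∀ j : Fin d → Fin (kk n), ∃ i : Fin n, X i = gridPt d (kk n) M j := by
      intro j
      refine ⟨⟨(e j : ℕ), lt_of_lt_of_le (e j).2 hkd⟩, ?_⟩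
      have : (⟨((e j : ℕ)) % kk n ^ d, Nat.mod_lt _ hkdpos⟩ : Fin (kk n ^ d)) = e j :=
        Fin.ext (by simp [Nat.mod_eq_of_lt (e j).2])
      simp only [hX, this, Equiv.symm_apply_apply]
    set t : ℝ := (d * M / kk n) ^ (-r) with htdef
    have htpos : 0 < t := Real.rpow_pos_of_pos (by positivity) _
    set c : ℝ := Real.log (1 + (P / n) * t) with hc
    have hcpos : 0 < c := Real.log_pos (by nlinarith [mul_pos (div_pos hP hn0) htpos])
    -- bad set
    set B : Set (EuclideanSpace ℝ (Fin d)) := ⋃ i : Fin n, {X i} with hB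
    have hBnull : volume B = 0 := by
      apply measure_iUnion_null
      intro i
      exact measure_singleton _
    have haeB : ∀ᵐ u ∂(volume.restrict S), u ∉ B :=
      ae_restrict_of_ae (measure_eq_zero_iff_ae_notMem.mp hBnull)
    have haeS : ∀ᵐ u ∂(volume.restrict S), u ∈ S := ae_restrict_mem hSmeas
    have hbound : (∫⁻ u in S, ENNReal.ofReal (c * f u)) ≤ avgRate d n P r S f X := by
      apply lintegral_mono_ae
      filter_upwards [haeS, haeB] with u huS huB
      apply ENNReal.ofReal_le_ofReal
      apply mul_le_mul_of_nonneg_right _ (hf0 u)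
      have hsum : t ≤ ∑ i, ‖u - X i‖ ^ (-r) := by
        obtain ⟨j, hj⟩ := grid_cover d hd hM hk1 u (hSsub huS)
        obtain ⟨i, hi⟩ := hXsurj j
        have hne : u ≠ X i := by
          intro h
          exact huB (Set.mem_iUnion.2 ⟨i, by simp [h]⟩)
        have hpos : 0 < ‖u - X i‖ := by
          rw [norm_pos_iff, sub_ne_zero]
          exact hne
        have h1 : t ≤ ‖u - X i‖ ^ (-r) := by
          rw [htdef]
          apply rpow_le_rpow_of_nonpos hpos _ (neg_nonpos.2 hr)
          rw [hi]; exact hj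
        calc t ≤ ‖u - X i‖ ^ (-r) := h1
          _ ≤ ∑ i', ‖u - X i'‖ ^ (-r) :=
              Finset.single_le_sum (f := fun i' => ‖u - X i'‖ ^ (-r))
                (fun i' _ => Real.rpow_nonneg (norm_nonneg _) _) (Finset.mem_univ i)
      apply Real.log_le_log (by positivity)
      apply add_le_add le_rfl
      exact mul_le_mul_of_nonneg_left hsum (by positivity)
    have hval : (∫⁻ u in S, ENNReal.ofReal (c * f u)) = ENNReal.ofReal c := by
      have : ∀ u, ENNReal.ofReal (c * f u) = ENNReal.ofReal c * ENNReal.ofReal (f u) :=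
        fun u => ENNReal.ofReal_mul hcpos.le
      simp_rw [this]
      have hmeas : AEMeasurable (fun u => ENNReal.ofReal (f u)) (volume.restrict S) :=
        ENNReal.measurable_ofReal.comp_aemeasurable hint.aestronglyMeasurable.aemeasurable
      rw [lintegral_const_mul'' _ hmeas, hlf, mul_one]
    calc ENNReal.ofReal c = ∫⁻ u in S, ENNReal.ofReal (c * f u) := hval.symm
      _ ≤ avgRate d n P r S f X := hbound
      _ ≤ optRate d n P r S f := le_iSup (fun X => avgRate d n P r S f X) X
  -- asymptotics
  set C : ℝ := Real.log P - r * Real.log (d * M) - r * Real.log 2 with hC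
  have hrpos : 0 < r := by
    by_contra h
    push_neg at h
    have : r / d ≤ 0 := div_nonpos_of_nonpos_of_nonneg h hd0.le
    simp [ha_def] at ha; linarith
  have claim2 : ∀ n : ℕ, 1 ≤ n → 2 ≤ (n:ℝ) ^ ((d:ℝ)⁻¹) →
      a * Real.log n + C ≤ Real.log (1 + (P / n) * ((d * M / kk n) ^ (-r))) := by
    intro n hn hn2
    have hn0 : (0:ℝ) < n := by exact_mod_cast hn
    have hk1 : 1 ≤ kk n := by
      apply Nat.le_floor; rw [Nat.cast_one]; linarith
    have hkpos : (0:ℝ) < kk n := by exact_mod_cast hk1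
    set y : ℝ := (n:ℝ) ^ ((d:ℝ)⁻¹) with hy
    have hky : y / 2 ≤ kk n := by
      have h1 : y - 1 < (⌊y⌋₊ : ℝ) := Nat.sub_one_lt_floor y
      have : y / 2 ≤ y - 1 := by linarith
      exact this.trans h1.le
    have hlogk : (d:ℝ)⁻¹ * Real.log n - Real.log 2 ≤ Real.log (kk n) := by
      have h1 : Real.log (y / 2) ≤ Real.log (kk n) :=
        Real.log_le_log (by linarith) hky
      rw [Real.log_div (by linarith) (by norm_num), hy, Real.log_rpow hn0] at h1
      exact h1
    have harg : 0 < (P / n) * ((d * M / kk n) ^ (-r)) := by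
      apply mul_pos (div_pos hP hn0) (Real.rpow_pos_of_pos (by positivity) _)
    have h2 : Real.log ((P / n) * ((d * M / kk n) ^ (-r))) ≤
        Real.log (1 + (P / n) * ((d * M / kk n) ^ (-r))) :=
      Real.log_le_log harg (by linarith)
    have h3 : Real.log ((P / n) * ((d * M / kk n) ^ (-r)))
        = Real.log P - Real.log n + (-r) * (Real.log (d * M) - Real.log (kk n)) := by
      rw [Real.log_mul (by positivity) (by positivity),
        Real.log_div hP.ne' hn0.ne',
        Real.log_rpow (by positivity),
        Real.log_div (by positivity) hkpos.ne']
    have h4 : a * Real.log n + C ≤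
        Real.log P - Real.log n + (-r) * (Real.log (d * M) - Real.log (kk n)) := by
      have h5 : r * ((d:ℝ)⁻¹ * Real.log n - Real.log 2) ≤ r * Real.log (kk n) :=
        mul_le_mul_of_nonneg_left hlogk hrpos.le
      rw [mul_sub] at h5
      have hrd : a * Real.log n = r * ((d:ℝ)⁻¹ * Real.log n) - Real.log n := by
        rw [ha_def]; field_simp
      rw [hC, hrd, mul_sub, neg_mul, neg_mul]
      linarith
    exact h4.trans (h3 ▸ h2)
  -- pass to the limit
  rw [Filter.le_liminf_iff]
  intro b hb
  have hbtop : b ≠ ⊤ := hb.ne_top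
  have hba : b.toReal < a := (ENNReal.lt_ofReal_iff_toReal_lt hbtop).mp hb
  have htend : Filter.Tendsto (fun n : ℕ => a + C / Real.log n) Filter.atTop (nhds a) := by
    have h1 : Filter.Tendsto (fun n : ℕ => Real.log n) Filter.atTop Filter.atTop :=
      Real.tendsto_log_atTop.comp tendsto_natCast_atTop_atTop
    have h2 : Filter.Tendsto (fun n : ℕ => C / Real.log n) Filter.atTop (nhds 0) := by
      simpa [div_eq_mul_inv] using (h1.inv_tendsto_atTop).const_mul C
    simpa using (tendsto_const_nhds.add h2)
  have hev1 : ∀ᶠ n : ℕ in Filter.atTop, b.toReal < a + C / Real.log n :=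
    (tendsto_order.mp htend).1 _ hba
  have hev2 : ∀ᶠ n : ℕ in Filter.atTop, 2 ≤ (n:ℝ) ^ ((d:ℝ)⁻¹) := by
    have h1 : Filter.Tendsto (fun n : ℕ => (n:ℝ) ^ ((d:ℝ)⁻¹)) Filter.atTop Filter.atTop :=
      (tendsto_rpow_atTop (by positivity)).comp tendsto_natCast_atTop_atTop
    exact h1.eventually_ge_atTop 2
  have hev3 : ∀ᶠ n : ℕ in Filter.atTop, (1:ℝ) ≤ Real.log n := by
    have h1 : Filter.Tendsto (fun n : ℕ => Real.log n) Filter.atTop Filter.atTop :=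
      Real.tendsto_log_atTop.comp tendsto_natCast_atTop_atTop
    exact h1.eventually_ge_atTop 1
  filter_upwards [hev1, hev2, hev3, Filter.eventually_ge_atTop 1] with n h1 h2 h3 hn1
  set cn : ℝ := Real.log (1 + (P / n) * ((d * M / kk n) ^ (-r))) with hcn
  have hlogpos : (0:ℝ) < Real.log n := by linarith
  have hcna : a * Real.log n + C ≤ cn := claim2 n hn1 h2
  have hdiv : a + C / Real.log n ≤ cn / Real.log n := by
    have heq : a + C / Real.log n = (a * Real.log n + C) / Real.log n := by
      field_simp
    rw [heq]
    gcongr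
  have hblt : b.toReal < cn / Real.log n := lt_of_lt_of_le h1 hdiv
  have step1 : b < ENNReal.ofReal (cn / Real.log n) :=
    (ENNReal.lt_ofReal_iff_toReal_lt hbtop).mpr hblt
  have step2 : ENNReal.ofReal (cn / Real.log n)
      = ENNReal.ofReal cn / ENNReal.ofReal (Real.log n) :=
    ENNReal.ofReal_div_of_pos hlogpos
  have step3 : ENNReal.ofReal cn / ENNReal.ofReal (Real.log n)
      ≤ optRate d n P r S f / ENNReal.ofReal (Real.log n) :=
    ENNReal.div_le_div_right (claim1 n hn1) _
  calc b < ENNReal.ofReal (cn / Real.log n) := step1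
    _ = ENNReal.ofReal cn / ENNReal.ofReal (Real.log n) := step2
    _ ≤ optRate d n P r S f / ENNReal.ofReal (Real.log n) := step3
end

section
/- Let d = 1, M > 0, S = [0,M], and f = 1/M on S. Then for every integer n ≥ 1, the supremum R̃_n of R̃(X) over all n-tuples X of points of ℝ equals log(n/M) + 1 + log 2 (that is, R̃_n = log(n/M) + log(2e)), and the supremum is attained. -/
open MeasureTheory Real
open scoped ENNReal BigOperators

open Set intervalIntegral

set_option linter.unusedSectionVars false
set_option maxHeartbeats 1000000

lemma myIntegrableOn_log_Ioc01 : IntegrableOn Real.log (Set.Ioc (0:ℝ) 1) := by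
  have h : IntegrableOn (fun x : ℝ => -Real.log x) (Set.Ioc (0:ℝ) 1) := by
    apply integrableOn_deriv_of_nonneg (g := fun x : ℝ => x - x * Real.log x)
    · exact (continuous_id.sub continuous_mul_log).continuousOn
    · intro x hx
      have : HasDerivAt (fun y : ℝ => y - y * Real.log y) (1 - (Real.log x + 1)) x :=
        (hasDerivAt_id x).sub (hasDerivAt_mul_log (ne_of_gt hx.1))
      convert this using 1
      ring
    · intro x hx
      have : Real.log x ≤ 0 := Real.log_nonpos hx.1.le hx.2.le
      linarith
  have h2 := h.neg
  exact h2.congr (Filter.EventuallyEq.of_eq (by funext x; simp))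

lemma myIntervalIntegrable_log_right (b : ℝ) (hb : 0 ≤ b) :
    IntervalIntegrable Real.log volume 0 b := by
  rw [intervalIntegrable_iff_integrableOn_Ioc_of_le hb]
  rcases le_or_gt b 1 with h1 | h1
  · exact myIntegrableOn_log_Ioc01.mono_set (Set.Ioc_subset_Ioc le_rfl h1)
  · have : Set.Ioc (0:ℝ) b ⊆ Set.Ioc 0 1 ∪ Set.Icc 1 b := by
      intro x hx
      rcases le_or_gt x 1 with h | h
      · exact Or.inl ⟨hx.1, h⟩
      · exact Or.inr ⟨h.le, hx.2⟩
    refine (IntegrableOn.union myIntegrableOn_log_Ioc01 ?_).mono_set this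
    refine ContinuousOn.integrableOn_compact isCompact_Icc ?_
    exact Real.continuousOn_log.mono (fun x hx => by simp; linarith [hx.1])

lemma myIntervalIntegrable_log (a b : ℝ) : IntervalIntegrable Real.log volume a b := by
  have key : ∀ c : ℝ, IntervalIntegrable Real.log volume 0 c := by
    intro c
    rcases le_or_gt 0 c with h | h
    · exact myIntervalIntegrable_log_right c h
    · have h2 : IntervalIntegrable Real.log volume 0 (-c) :=
        myIntervalIntegrable_log_right (-c) (by linarith)
      rw [IntervalIntegrable.iff_comp_neg] at h2
      simpa using h2
  exact (key a).symm.trans (key b)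

lemma myIntegral_log (b : ℝ) (hb : 0 ≤ b) :
    ∫ x in (0:ℝ)..b, Real.log x = b * Real.log b - b := by
  rcases eq_or_lt_of_le hb with rfl | hb
  · simp
  · -- continuity of a ↦ ∫ x in a..b, log x at 0 within [0,b]
    have hcont : ContinuousWithinAt (fun a => ∫ x in b..a, Real.log x) (Set.Icc 0 b) 0 := by
      apply intervalIntegral.continuousWithinAt_primitive (by simp)
      exact myIntervalIntegrable_log _ _
    have h1 : Filter.Tendsto (fun a => ∫ x in b..a, Real.log x) (nhdsWithin 0 (Set.Ioo 0 b))
        (nhds (∫ x in b..(0:ℝ), Real.log x)) :=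
      hcont.tendsto.mono_left (nhdsWithin_mono _ Set.Ioo_subset_Icc_self)
    have h2 : Filter.Tendsto (fun a : ℝ => a * Real.log a - a - (b * Real.log b - b))
        (nhdsWithin 0 (Set.Ioo 0 b)) (nhds (0 - (b * Real.log b - b))) := by
      have : Continuous (fun a : ℝ => a * Real.log a - a - (b * Real.log b - b)) :=
        (continuous_mul_log.sub continuous_id).sub continuous_const
      have := this.tendsto 0
      simp only [Real.log_zero, mul_zero, zero_mul, sub_zero, zero_sub] at this ⊢
      exact this.mono_left nhdsWithin_le_nhds
    have heq : ∀ a ∈ Set.Ioo (0:ℝ) b,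
        (∫ x in b..a, Real.log x) = a * Real.log a - a - (b * Real.log b - b) := by
      intro a ha
      rw [intervalIntegral.integral_symm, integral_log]
      ring
    have h3 : Filter.Tendsto (fun a => ∫ x in b..a, Real.log x) (nhdsWithin 0 (Set.Ioo 0 b))
        (nhds (0 - (b * Real.log b - b))) :=
      h2.congr' (by
        filter_upwards [self_mem_nhdsWithin] with a ha
        exact (heq a ha).symm)
    have hne : (nhdsWithin (0:ℝ) (Set.Ioo 0 b)).NeBot := by
      apply IsGLB.nhdsWithin_neBot
      · exact isGLB_Ioo hb
      · exact Set.nonempty_Ioo.mpr hb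
    have := tendsto_nhds_unique h1 h3
    rw [intervalIntegral.integral_symm 0 b] at this
    linarith

lemma myIntervalIntegrable_log_sub (c a b : ℝ) :
    IntervalIntegrable (fun u => Real.log (u - c)) volume a b := by
  simpa using (myIntervalIntegrable_log (a - c) (b - c)).comp_sub_right c

lemma myIntegral_log_cell (c h : ℝ) (hh : 0 ≤ h) :
    ∫ u in (c-h)..(c+h), Real.log (u - c) = 2 * (h * Real.log h - h) := by
  rw [intervalIntegral.integral_comp_sub_right (fun x => Real.log x) c]
  have e1 : c - h - c = -h := by ring
  have e2 : c + h - c = h := by ring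
  rw [e1, e2]
  have hsplit : (∫ x in (-h)..(0:ℝ), Real.log x) + (∫ x in (0:ℝ)..h, Real.log x)
      = ∫ x in (-h)..h, Real.log x :=
    intervalIntegral.integral_add_adjacent_intervals
      (myIntervalIntegrable_log _ _) (myIntervalIntegrable_log _ _)
  have hneg : (∫ x in (-h)..(0:ℝ), Real.log x) = ∫ x in (0:ℝ)..h, Real.log x := by
    have : (∫ x in (-h)..(0:ℝ), Real.log (-x)) = ∫ x in (-0:ℝ)..(-(-h)), Real.log x :=
      intervalIntegral.integral_comp_neg (fun x => Real.log x)
    simp only [neg_neg, neg_zero] at this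
    rw [← this]
    apply intervalIntegral.integral_congr
    intro x _
    exact (Real.log_neg_eq_log x).symm
  rw [← hsplit, hneg, myIntegral_log h hh]
  ring

section InfAbs
variable {n : ℕ} (hn : 1 ≤ n) (X : Fin n → ℝ)

lemma bddBelow_abs (u : ℝ) : BddBelow (Set.range fun i => |u - X i|) :=
  ⟨0, by rintro _ ⟨i, rfl⟩; exact abs_nonneg _⟩

include hn

lemma inf_abs_nonneg (u : ℝ) : 0 ≤ ⨅ i, |u - X i| := by
  have : Nonempty (Fin n) := ⟨⟨0, hn⟩⟩
  exact le_ciInf fun i => abs_nonneg _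

lemma inf_abs_le (u : ℝ) (i : Fin n) : (⨅ j, |u - X j|) ≤ |u - X i| :=
  ciInf_le (bddBelow_abs X u) i

lemma inf_abs_attain (u : ℝ) : ∃ i, (⨅ j, |u - X j|) = |u - X i| := by
  have : Nonempty (Fin n) := ⟨⟨0, hn⟩⟩
  obtain ⟨i, hi⟩ := exists_eq_ciInf_of_finite (f := fun i => |u - X i|)
  exact ⟨i, hi.symm⟩

lemma inf_abs_continuous : Continuous fun u => ⨅ i, |u - X i| := by
  have hne : Nonempty (Fin n) := ⟨⟨0, hn⟩⟩
  have : (fun u => ⨅ i, |u - X i|)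
      = fun u => Finset.univ.inf' Finset.univ_nonempty (fun i => |u - X i|) := by
    funext u
    exact (Finset.inf'_univ_eq_ciInf _).symm
  rw [this]
  exact Continuous.finset_inf'_apply Finset.univ_nonempty
    (fun i _ => (continuous_id.sub continuous_const).abs)

end InfAbs

lemma integrableOn_log_abs_sub (x a b : ℝ) (hab : a ≤ b) :
    IntegrableOn (fun u => |Real.log (u - x)|) (Set.Icc a b) := by
  rw [integrableOn_Icc_iff_integrableOn_Ioc]
  have := (myIntervalIntegrable_log_sub x a b).def'
  rw [Set.uIoc_of_le hab] at this
  exact this.abs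

lemma integrableOn_log_inf {n : ℕ} (hn : 1 ≤ n) (X : Fin n → ℝ) (a b : ℝ) (hab : a ≤ b) :
    IntegrableOn (fun u => Real.log (⨅ i, |u - X i|)) (Set.Icc a b) := by
  have hmeas : AEStronglyMeasurable (fun u => Real.log (⨅ i, |u - X i|))
      (volume.restrict (Set.Icc a b)) :=
    (Real.measurable_log.comp (inf_abs_continuous hn X).measurable).aestronglyMeasurable
  refine Integrable.mono' (g := fun u => ∑ i : Fin n, |Real.log (u - X i)|) ?_ hmeas ?_
  · exact integrable_finset_sum _ (fun i _ => integrableOn_log_abs_sub (X i) a b hab)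
  · filter_upwards with u
    obtain ⟨j, hj⟩ := inf_abs_attain hn X u
    rw [Real.norm_eq_abs, hj, Real.log_abs]
    exact Finset.single_le_sum (f := fun i => |Real.log (u - X i)|)
      (fun i _ => abs_nonneg _) (Finset.mem_univ j)
/-- The logarithmic quantization objective for points `X` in a one-dimensional
cell `[0, M]` with the uniform density `1/M`. -/
noncomputable def logQuantObj (M : ℝ) (n : ℕ) (X : Fin n → ℝ) : ℝ :=
  ∫ u in Set.Icc (0 : ℝ) M, Real.log (1 / ⨅ i, |u - X i|) / M


lemma upper_bound (M : ℝ) (hM : 0 < M) (n : ℕ) (hn : 1 ≤ n) (X : Fin n → ℝ) :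
    logQuantObj M n X ≤ Real.log (↑n / M) + 1 + Real.log 2 := by
  have hnpos : (0:ℝ) < n := by exact_mod_cast hn
  set g : ℝ → ℝ := fun u => ⨅ i, |u - X i| with hg
  set μ : Measure ℝ := volume.restrict (Set.Icc 0 M) with hμ
  set E : ℝ := M + |X ⟨0, hn⟩| + 1 with hE
  have habs0 : 0 ≤ |X ⟨0, hn⟩| := abs_nonneg _
  have hE1 : (1:ℝ) ≤ E := by rw [hE]; linarith
  have hEpos : (0:ℝ) < E := by linarith
  set C : ℝ := Real.log E with hC
  have hC0 : 0 ≤ C := Real.log_nonneg hE1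
  have hexpC : Real.exp C = E := Real.exp_log hEpos
  -- bound on g on [0, M]
  have hgle : ∀ u ∈ Set.Icc (0:ℝ) M, g u ≤ M + |X ⟨0, hn⟩| := by
    intro u hu
    refine le_trans (inf_abs_le hn X u ⟨0, hn⟩) ?_
    calc |u - X ⟨0, hn⟩| ≤ |u| + |X ⟨0, hn⟩| := abs_sub _ _
      _ ≤ M + |X ⟨0, hn⟩| := by
          have : |u| ≤ M := abs_le.mpr ⟨by linarith [hu.1], hu.2⟩
          linarith
  have hlogle : ∀ u ∈ Set.Icc (0:ℝ) M, Real.log (g u) ≤ C := by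
    intro u hu
    rcases eq_or_lt_of_le (inf_abs_nonneg hn X u) with h0 | h0
    · have hgu0 : g u = 0 := h0.symm
      rw [hgu0]; simpa using hC0
    · apply Real.log_le_log h0
      linarith [hgle u hu]
  set h : ℝ → ℝ := fun u => C - Real.log (g u) with hh
  have hint_log : Integrable (fun u => Real.log (g u)) μ :=
    integrableOn_log_inf hn X 0 M hM.le
  have hint_h : Integrable h μ := (integrable_const C).sub hint_log
  have h_nn : 0 ≤ᵐ[μ] h := by
    have : ∀ᵐ u ∂μ, 0 ≤ h u := by
      rw [hμ, ae_restrict_iff' measurableSet_Icc]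
      filter_upwards with u hu
      simp only [hh]
      linarith [hlogle u hu]
    exact this
  -- layer cake
  have hlayer := hint_h.integral_eq_integral_meas_lt h_nn
  -- pointwise bound on measures
  have hmeas_bound : ∀ t : ℝ, 0 < t →
      (μ {a | t < h a}).toReal ≤ min M (2 * n * E * Real.exp (-t)) := by
    intro t ht
    have hsub : {a | t < h a} ∩ Set.Icc 0 M ⊆ ⋃ i, Metric.ball (X i) (E * Real.exp (-t)) := by
      rintro u ⟨hu1, hu2⟩
      have hgu : g u < Real.exp (C - t) := by
        have hlg : Real.log (g u) < C - t := by
          simp only [Set.mem_setOf_eq, hh] at hu1; linarith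
        rcases eq_or_lt_of_le (inf_abs_nonneg hn X u) with h0 | h0
        · have hgu0 : g u = 0 := h0.symm
          rw [hgu0]; exact Real.exp_pos _
        · exact (Real.log_lt_iff_lt_exp h0).mp hlg
      obtain ⟨j, hj⟩ := inf_abs_attain hn X u
      refine Set.mem_iUnion.mpr ⟨j, ?_⟩
      rw [Metric.mem_ball, Real.dist_eq]
      have h2 : Real.exp (C - t) = E * Real.exp (-t) := by
        rw [Real.exp_sub, hexpC, Real.exp_neg]; ring
      have h3 : g u < E * Real.exp (-t) := h2 ▸ hgu
      have h4 : |u - X j| ≤ g u := le_of_eq hj.symm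
      exact lt_of_le_of_lt h4 h3
    have hb1 : μ {a | t < h a} ≤ ENNReal.ofReal M := by
      calc μ {a | t < h a} ≤ μ Set.univ := measure_mono (Set.subset_univ _)
        _ = ENNReal.ofReal M := by
            rw [hμ, Measure.restrict_apply MeasurableSet.univ, Set.univ_inter,
              Real.volume_Icc, sub_zero]
    have hb2 : μ {a | t < h a} ≤ ENNReal.ofReal (2 * n * E * Real.exp (-t)) := by
      rw [hμ, Measure.restrict_apply' measurableSet_Icc]
      calc volume ({a | t < h a} ∩ Set.Icc 0 M)
          ≤ volume (⋃ i, Metric.ball (X i) (E * Real.exp (-t))) := measure_mono hsub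
        _ ≤ ∑ i : Fin n, volume (Metric.ball (X i) (E * Real.exp (-t))) :=
            measure_iUnion_fintype_le _ _
        _ = ∑ i : Fin n, ENNReal.ofReal (2 * (E * Real.exp (-t))) := by
            simp [Real.volume_ball]
        _ = ENNReal.ofReal (2 * n * E * Real.exp (-t)) := by
            rw [Finset.sum_const, Finset.card_univ, Fintype.card_fin, nsmul_eq_mul,
              ← ENNReal.ofReal_natCast, ← ENNReal.ofReal_mul (by positivity)]
            congr 1
            ring
    have : μ {a | t < h a} ≤ ENNReal.ofReal (min M (2 * n * E * Real.exp (-t))) := by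
      rcases min_cases M (2 * n * E * Real.exp (-t)) with ⟨heq, _⟩ | ⟨heq, _⟩ <;> rw [heq]
      · exact hb1
      · exact hb2
    exact ENNReal.toReal_le_of_le_ofReal (le_min hM.le (by positivity)) this
  -- integrability of the bounding function on Ioi 0
  have hbound_int : IntegrableOn (fun t => min M (2 * n * E * Real.exp (-t))) (Set.Ioi (0:ℝ)) := by
    have hexp : IntegrableOn (fun t : ℝ => 2 * n * E * Real.exp (-t)) (Set.Ioi (0:ℝ)) := by
      have := (exp_neg_integrableOn_Ioi (0:ℝ) (b := 1) one_pos).const_mul (2 * n * E)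
      simp only [neg_mul, one_mul] at this; exact this
    refine Integrable.mono' hexp ?_ ?_
    · exact ((continuous_const.min
        ((continuous_const.mul (Real.continuous_exp.comp continuous_neg)))).aestronglyMeasurable)
    · filter_upwards with t
      rw [Real.norm_eq_abs, abs_of_nonneg (le_min hM.le (by positivity))]
      exact min_le_right _ _
  -- comparison
  have hcomp : ∫ t in Set.Ioi (0:ℝ), (μ {a | t < h a}).toReal
      ≤ ∫ t in Set.Ioi (0:ℝ), min M (2 * n * E * Real.exp (-t)) := by
    refine integral_mono_of_nonneg ?_ hbound_int ?_
    · filter_upwards with t; exact ENNReal.toReal_nonneg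
    · have : ∀ᵐ t ∂(volume.restrict (Set.Ioi (0:ℝ))),
          (μ {a | t < h a}).toReal ≤ min M (2 * n * E * Real.exp (-t)) := by
        rw [ae_restrict_iff' measurableSet_Ioi]
        filter_upwards with t ht
        exact hmeas_bound t ht
      exact this
  -- compute the bounding integral
  set t0 : ℝ := Real.log (2 * n * E / M) with ht0def
  have hn1 : (1:ℝ) ≤ n := by exact_mod_cast hn
  have hEgtM : M < E := by rw [hE]; linarith
  have harg : (1:ℝ) < 2 * n * E / M := by
    rw [lt_div_iff₀ hM]
    nlinarith [mul_le_mul_of_nonneg_right hn1 hEpos.le]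
  have ht0 : 0 < t0 := Real.log_pos harg
  have hexpt0 : Real.exp (-t0) = M / (2 * n * E) := by
    rw [Real.exp_neg, ht0def, Real.exp_log (by positivity), inv_div]
  have hsplitset : Set.Ioc (0:ℝ) t0 ∪ Set.Ioi t0 = Set.Ioi 0 := Set.Ioc_union_Ioi_eq_Ioi ht0.le
  have hcompute : ∫ t in Set.Ioi (0:ℝ), min M (2 * n * E * Real.exp (-t)) = M * t0 + M := by
    rw [← hsplitset]
    rw [setIntegral_union (Set.Ioc_disjoint_Ioi le_rfl) measurableSet_Ioi
      (hbound_int.mono_set (by rw [← hsplitset]; exact Set.subset_union_left))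
      (hbound_int.mono_set (by rw [← hsplitset]; exact Set.subset_union_right))]
    have hpart1 : ∫ t in Set.Ioc (0:ℝ) t0, min M (2 * n * E * Real.exp (-t)) = M * t0 := by
      rw [setIntegral_congr_fun measurableSet_Ioc (g := fun _ => M) ?_]
      · simp [Real.volume_Ioc, ht0.le, ENNReal.toReal_ofReal, mul_comm]
      · intro t htx
        apply min_eq_left
        have : Real.exp (-t0) ≤ Real.exp (-t) := Real.exp_le_exp.mpr (by linarith [htx.2])
        calc M = 2 * n * E * (M / (2 * n * E)) := by field_simp
          _ = 2 * n * E * Real.exp (-t0) := by rw [hexpt0]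
          _ ≤ 2 * n * E * Real.exp (-t) := by
              apply mul_le_mul_of_nonneg_left this (by positivity)
    have hpart2 : ∫ t in Set.Ioi t0, min M (2 * n * E * Real.exp (-t)) = M := by
      rw [setIntegral_congr_fun measurableSet_Ioi (g := fun t => 2 * n * E * Real.exp (-t)) ?_]
      · rw [MeasureTheory.integral_const_mul, integral_exp_neg_Ioi, hexpt0]
        field_simp
      · intro t htx
        apply min_eq_right
        have hlt : Real.exp (-t) ≤ Real.exp (-t0) := Real.exp_le_exp.mpr (by
          simp only [Set.mem_Ioi] at htx; linarith)
        calc 2 * n * E * Real.exp (-t) ≤ 2 * n * E * Real.exp (-t0) :=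
              mul_le_mul_of_nonneg_left hlt (by positivity)
          _ = M := by rw [hexpt0]; field_simp
    rw [hpart1, hpart2]
  -- put it together
  have hmain : ∫ u, h u ∂μ ≤ M * t0 + M := by
    rw [hlayer, ← hcompute]; exact hcomp
  have hCint : ∫ u, C ∂μ = C * M := by
    rw [hμ, setIntegral_const, measureReal_def, Real.volume_Icc, sub_zero, smul_eq_mul,
      ENNReal.toReal_ofReal hM.le]
    ring
  have hsub : ∫ u, h u ∂μ = C * M - ∫ u, Real.log (g u) ∂μ := by
    rw [hh]
    rw [integral_sub (integrable_const C) hint_log, hCint]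
  have hI : -(∫ u, Real.log (g u) ∂μ) ≤ M * t0 + M - C * M := by
    rw [hsub] at hmain; linarith
  -- identify the objective
  have hobj : logQuantObj M n X = (-(∫ u, Real.log (g u) ∂μ)) / M := by
    rw [logQuantObj,
      show (-(∫ u, Real.log (g u) ∂μ)) = ∫ u, -Real.log (g u) ∂μ from
        (MeasureTheory.integral_neg _).symm,
      ← MeasureTheory.integral_div]
    apply MeasureTheory.integral_congr_ae
    filter_upwards with u
    rw [one_div, Real.log_inv]
  rw [hobj]
  rw [div_le_iff₀ hM]
  have ht0eq : t0 = Real.log (n / M) + Real.log 2 + C := by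
    rw [ht0def, hC]
    rw [show 2 * (n:ℝ) * E / M = (n / M) * 2 * E by ring]
    rw [Real.log_mul (by positivity) (by positivity), Real.log_mul (by positivity) (by norm_num)]
  calc -(∫ u, Real.log (g u) ∂μ) ≤ M * t0 + M - C * M := hI
    _ = (Real.log (↑n / M) + 1 + Real.log 2) * M := by rw [ht0eq]; ring


lemma nat_cast_abs_sub_ge_one {i j : ℕ} (hij : i ≠ j) : 1 ≤ |(i:ℝ) - j| := by
  rcases lt_or_gt_of_ne hij with h | h
  · have : (i:ℝ) + 1 ≤ j := by exact_mod_cast h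
    rw [abs_sub_comm, abs_of_nonneg (by linarith)]
    linarith
  · have : (j:ℝ) + 1 ≤ i := by exact_mod_cast h
    rw [abs_of_nonneg (by linarith)]
    linarith

lemma attained (M : ℝ) (hM : 0 < M) (n : ℕ) (hn : 1 ≤ n) :
    logQuantObj M n (fun i => (2 * (i:ℝ) + 1) * (M / (2 * n)))
      = Real.log (↑n / M) + 1 + Real.log 2 := by
  have hnpos : (0:ℝ) < n := by exact_mod_cast hn
  set h : ℝ := M / (2 * n) with hhdef
  have hhpos : 0 < h := by positivity
  set X : Fin n → ℝ := fun i => (2 * (i:ℝ) + 1) * h with hX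
  have hM2 : M = 2 * n * h := by rw [hhdef]; field_simp
  clear_value h
  -- cell identity
  have hcell : ∀ (i : Fin n), ∀ u ∈ Set.uIcc (2 * (i:ℝ) * h) (2 * ((i:ℝ) + 1) * h),
      (⨅ j, |u - X j|) = |u - X i| := by
    intro i u hu
    rw [Set.uIcc_of_le (by nlinarith)] at hu
    have hui : |u - X i| ≤ h := by
      rw [abs_le]
      constructor
      · have := hu.1; rw [hX]; simp only; nlinarith
      · have := hu.2; rw [hX]; simp only; nlinarith
    have hne : Nonempty (Fin n) := ⟨⟨0, hn⟩⟩
    refine le_antisymm (inf_abs_le hn X u i) (le_ciInf fun j => ?_)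
    rcases eq_or_ne j i with rfl | hij
    · exact le_refl _
    · have hd : 2 * h ≤ |X i - X j| := by
        have h1 : 1 ≤ |((i:ℕ):ℝ) - ((j:ℕ):ℝ)| :=
          nat_cast_abs_sub_ge_one (fun hc => hij (Fin.ext hc.symm))
        have : X i - X j = 2 * h * ((i:ℝ) - j) := by rw [hX]; simp only; ring
        rw [this, abs_mul, abs_of_nonneg (by positivity)]
        nlinarith
      have htri : |X i - X j| ≤ |u - X i| + |u - X j| := by
        have := abs_sub_abs_le_abs_sub (X i - u) (X j - u)
        calc |X i - X j| = |(X i - u) - (X j - u)| := by ring_nf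
          _ ≤ |X i - u| + |X j - u| := abs_sub _ _
          _ = |u - X i| + |u - X j| := by rw [abs_sub_comm (X i) u, abs_sub_comm (X j) u]
      linarith
  -- the partition points
  set a : ℕ → ℝ := fun k => 2 * (k:ℝ) * h with ha
  have ha0 : a 0 = 0 := by show 2 * ((0:ℕ):ℝ) * h = 0; simp
  have han : a n = M := by show 2 * (n:ℝ) * h = M; rw [hM2]
  have hamono : ∀ k, a k ≤ a (k+1) := by
    intro k
    show 2 * (k:ℝ) * h ≤ 2 * ((k:ℕ)+1:ℕ) * h
    push_cast
    nlinarith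
  have harange : ∀ k, k ≤ n → 0 ≤ a k ∧ a k ≤ M := by
    intro k hk
    have hkr : (k:ℝ) ≤ n := by exact_mod_cast hk
    constructor
    · show (0:ℝ) ≤ 2 * (k:ℝ) * h
      positivity
    · show 2 * (k:ℝ) * h ≤ M
      rw [hM2]; nlinarith
  -- interval integrability on each cell
  have hii : ∀ k, k < n → IntervalIntegrable
      (fun u => -Real.log (⨅ j, |u - X j|)) volume (a k) (a (k+1)) := by
    intro k hk
    rw [intervalIntegrable_iff_integrableOn_Ioc_of_le (hamono k)]
    have hbase : IntegrableOn (fun u => -Real.log (⨅ j, |u - X j|)) (Set.Icc 0 M) volume :=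
      ((integrableOn_log_inf hn X 0 M hM.le).neg).congr
        (Filter.EventuallyEq.of_eq (by funext x; simp))
    refine hbase.mono_set ?_
    refine Set.Ioc_subset_Icc_self.trans (Set.Icc_subset_Icc ?_ ?_)
    · exact (harange k (le_of_lt hk)).1
    · exact (harange (k+1) hk).2
  -- value on each cell
  have hcellval : ∀ k (hk : k < n),
      (∫ u in (a k)..(a (k+1)), -Real.log (⨅ j, |u - X j|))
        = -(2 * (h * Real.log h - h)) := by
    intro k hk
    set i : Fin n := ⟨k, hk⟩ with hi
    have hik : ((i:ℕ):ℝ) = (k:ℝ) := by rw [hi]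
    have hak : a k = X i - h := by rw [ha, hX]; simp only [hik]; ring
    have hak1 : a (k+1) = X i + h := by rw [ha, hX]; simp only [hik]; push_cast; ring
    have hcong : ∀ u ∈ Set.uIcc (a k) (a (k+1)),
        -Real.log (⨅ j, |u - X j|) = -Real.log (u - X i) := by
      intro u hu
      have : (⨅ j, |u - X j|) = |u - X i| := by
        apply hcell i u
        have e1 : (2 * ((i:ℕ):ℝ) * h) = a k := by rw [ha, hik]
        have e2 : (2 * (((i:ℕ):ℝ) + 1) * h) = a (k+1) := by rw [ha, hik]; push_cast; ring
        rw [e1, e2]; exact hu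
      rw [this, Real.log_abs]
    rw [intervalIntegral.integral_congr hcong]
    rw [intervalIntegral.integral_neg, hak, hak1, myIntegral_log_cell (X i) h hhpos.le]
  -- sum up
  have hsum := intervalIntegral.sum_integral_adjacent_intervals (a := a)
    (f := fun u => -Real.log (⨅ j, |u - X j|)) (μ := volume) (n := n) hii
  rw [ha0, han] at hsum
  have hsumval : (∫ u in (0:ℝ)..M, -Real.log (⨅ j, |u - X j|))
      = n * (-(2 * (h * Real.log h - h))) := by
    rw [← hsum]
    rw [Finset.sum_congr rfl (fun k hk => hcellval k (Finset.mem_range.mp hk))]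
    simp [Finset.sum_const]
  -- convert to the objective
  have hobj : logQuantObj M n X
      = (∫ u in (0:ℝ)..M, -Real.log (⨅ j, |u - X j|)) / M := by
    rw [logQuantObj, intervalIntegral.integral_of_le hM.le,
      ← MeasureTheory.integral_Icc_eq_integral_Ioc, ← MeasureTheory.integral_div]
    apply MeasureTheory.integral_congr_ae
    filter_upwards with u
    rw [one_div, Real.log_inv]
  rw [hobj, hsumval]
  have hlogh : Real.log h = Real.log M - (Real.log 2 + Real.log n) := by
    rw [hhdef, Real.log_div hM.ne' (by positivity),
      Real.log_mul two_ne_zero (by positivity)]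
  have hlognM : Real.log (↑n / M) = Real.log n - Real.log M :=
    Real.log_div (by positivity) hM.ne'
  rw [hlogh, hlognM, div_eq_iff hM.ne']
  linear_combination (-(Real.log (n:ℝ) - Real.log M + 1 + Real.log 2)) * hM2

theorem one_dim_uniform_opt (M : ℝ) (hM : 0 < M) (n : ℕ) (hn : 1 ≤ n) :
    IsGreatest (Set.range fun X : Fin n → ℝ => logQuantObj M n X)
      (Real.log (n / M) + 1 + Real.log 2) := by
  constructor
  · exact ⟨fun i => (2 * (i:ℝ) + 1) * (M / (2 * n)), attained M hM n hn⟩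
  · rintro y ⟨X, rfl⟩
    exact upper_bound M hM n hn X
end

section
/- Let M > 0, S = [0,M], f = 1/M on S, and for an integer n ≥ 1 let X be the uniform midpoint codebook X = { (2i−1)M/(2n) : i = 1, …, n }. Then R̃(X) = log(n/M) + 1 + log 2. -/
open MeasureTheory Real
open scoped ENNReal BigOperators

/-- log is interval integrable on `[0, h]` for `h > 0`. -/
lemma aux_intervalIntegrable_log {h : ℝ} (hh : 0 < h) :
    IntervalIntegrable Real.log volume 0 h := by
  have h1 : IntervalIntegrable Real.log volume 0 (min h 1) := by
    have hmin : 0 < min h 1 := lt_min hh one_pos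
    have hneg : IntervalIntegrable (fun x => -Real.log x) volume 0 (min h 1) := by
      apply intervalIntegral.intervalIntegrable_deriv_of_nonneg (g := fun x => x - x * Real.log x)
      · exact (continuous_id.sub Real.continuous_mul_log).continuousOn
      · intro x hx
        rw [min_eq_left hmin.le, max_eq_right hmin.le] at hx
        have := (hasDerivAt_id x).sub (Real.hasDerivAt_mul_log hx.1.ne')
        exact this.congr_deriv (by ring)
      · intro x hx
        rw [min_eq_left hmin.le, max_eq_right hmin.le] at hx
        have hxlt1 : x < 1 := lt_of_lt_of_le hx.2 (min_le_right h 1)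
        have := Real.log_neg hx.1 hxlt1
        linarith
    have hfun : (-fun x : ℝ => -Real.log x) = Real.log := by funext x; simp
    have := hneg.neg
    rwa [hfun] at this
  have h2 : IntervalIntegrable Real.log volume (min h 1) h :=
    intervalIntegral.intervalIntegrable_log (by
      intro hmem
      rcases hmem with ⟨h1, h2⟩
      have : 0 < min (min h 1) h := lt_min (lt_min hh one_pos) hh
      nlinarith [lt_min hh one_pos])
  exact h1.trans h2

lemma aux_integral_log {h : ℝ} (hh : 0 < h) :
    ∫ x in (0:ℝ)..h, Real.log x = h * Real.log h - h := by
  have := intervalIntegral.integral_eq_sub_of_hasDeriv_right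
    (f := fun x => x * Real.log x - x) (f' := Real.log) (a := (0:ℝ)) (b := h)
    ((Real.continuous_mul_log.sub continuous_id).continuousOn)
    (fun x hx => by
      have hx1 : 0 < x := by
        have := hx.1
        rwa [min_eq_left hh.le] at this
      have hder : HasDerivAt (fun x => x * Real.log x - x) (Real.log x + 1 - 1) x :=
        (Real.hasDerivAt_mul_log hx1.ne').sub (hasDerivAt_id x)
      simpa using hder.hasDerivWithinAt)
    (aux_intervalIntegrable_log hh)
  simpa using this

lemma aux_intervalIntegrable_log_neg {h : ℝ} (hh : 0 < h) :
    IntervalIntegrable Real.log volume (-h) 0 := by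
  have := (IntervalIntegrable.iff_comp_neg (f := Real.log) (a := 0) (b := h) (by simp)).mp (aux_intervalIntegrable_log hh)
  have heq : (fun x : ℝ => Real.log (-x)) = Real.log := by
    funext x; exact Real.log_neg_eq_log x
  rw [heq] at this
  simpa using this.symm

lemma aux_integral_log_sym {h : ℝ} (hh : 0 < h) :
    ∫ x in (-h)..h, Real.log x = 2 * (h * Real.log h - h) := by
  have hsplit := intervalIntegral.integral_add_adjacent_intervals
    (aux_intervalIntegrable_log_neg hh) (aux_intervalIntegrable_log hh)
  have hleft : ∫ x in (-h)..(0:ℝ), Real.log x = h * Real.log h - h := by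
    have := intervalIntegral.integral_comp_neg (a := (0:ℝ)) (b := h) (f := Real.log)
    simp only [neg_zero] at this
    rw [← this]
    have heq : (fun x : ℝ => Real.log (-x)) = Real.log := by
      funext x; exact Real.log_neg_eq_log x
    rw [heq, aux_integral_log hh]
  rw [← hsplit, hleft, aux_integral_log hh]
  ring

theorem one_dim_midpoint_codebook (M : ℝ) (hM : 0 < M) (n : ℕ) (hn : 1 ≤ n) :
    (∫ u in Set.Icc (0 : ℝ) M,
        Real.log (1 / ⨅ i : Fin n, |u - (2 * (i : ℝ) + 1) * M / (2 * n)|) / M) =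
      Real.log (n / M) + 1 + Real.log 2 := by
  have hn0 : (0:ℝ) < n := by exact_mod_cast hn
  set h : ℝ := M / (2 * n) with hh_def
  have hh : 0 < h := by positivity
  set c : ℕ → ℝ := fun i => (2 * i + 1) * h with hc_def
  set a : ℕ → ℝ := fun i => 2 * i * h with ha_def
  set g : ℝ → ℝ := fun u => Real.log (1 / ⨅ i : Fin n, |u - (2 * (i : ℝ) + 1) * M / (2 * n)|)
    with hg_def
  haveI : Nonempty (Fin n) := ⟨⟨0, hn⟩⟩
  have hcoe : ∀ i : Fin n, (2 * (i : ℝ) + 1) * M / (2 * n) = c i := by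
    intro i
    simp only [hc_def, hh_def]
    ring
  -- key: on [a i, a (i+1)], the infimum equals |u - c i|
  have hinf : ∀ i : ℕ, i < n → ∀ u ∈ Set.Icc (a i) (a (i+1)),
      (⨅ j : Fin n, |u - (2 * (j : ℝ) + 1) * M / (2 * n)|) = |u - c i| := by
    intro i hi u hu
    rcases hu with ⟨hu1, hu2⟩
    have hdist : |u - c i| ≤ h := by
      rw [abs_le]
      constructor
      · simp only [ha_def, hc_def] at hu1 ⊢; push_cast at hu1 ⊢; linarith
      · simp only [ha_def, hc_def] at hu2 ⊢; push_cast at hu2 ⊢; linarith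
    apply le_antisymm
    · have := ciInf_le (f := fun j : Fin n => |u - (2 * (j : ℝ) + 1) * M / (2 * n)|)
        (Set.Finite.bddBelow (Set.finite_range _)) ⟨i, hi⟩
      simpa [hcoe ⟨i, hi⟩] using this
    · apply le_ciInf
      intro j
      rw [hcoe j]
      by_cases hji : (j : ℕ) = i
      · simp [hji]
      · have hsep : 2 * h ≤ |c j - c i| := by
          have h1 : (1:ℝ) ≤ |(j:ℝ) - (i:ℝ)| := by
            have hne : ((j:ℤ) - (i:ℤ)) ≠ 0 := by
              intro hcon; apply hji; omega
            have h2 : (1:ℤ) ≤ |(j:ℤ) - (i:ℤ)| := Int.one_le_abs hne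
            exact_mod_cast h2
          have hd : c j - c i = 2 * ((j:ℝ) - (i:ℝ)) * h := by
            simp only [hc_def]; ring
          rw [hd, abs_mul, abs_mul, abs_two, abs_of_pos hh]
          nlinarith
        have htri : |c j - c i| ≤ |u - c j| + |u - c i| := by
          calc |c j - c i| = |(c j - u) - (c i - u)| := by congr 1; ring
            _ ≤ |c j - u| + |c i - u| := abs_sub _ _
            _ = |u - c j| + |u - c i| := by rw [abs_sub_comm (c j), abs_sub_comm (c i)]
        linarith
  -- on [a i, a (i+1)], g u = -log (u - c i)
  have hgeq : ∀ i : ℕ, i < n → ∀ u ∈ Set.Icc (a i) (a (i+1)),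
      g u = -Real.log (u - c i) := by
    intro i hi u hu
    rw [hg_def]
    simp only
    rw [hinf i hi u hu, one_div, Real.log_inv, Real.log_abs]
  have haeq : ∀ i : ℕ, a i ≤ a (i+1) := by
    intro i
    simp only [ha_def]
    push_cast
    nlinarith
  -- integrability of -log (u - c i) on [a i, a (i+1)]
  have hbase_int : ∀ i : ℕ, IntervalIntegrable (fun u => -Real.log (u - c i)) volume
      (a i) (a (i+1)) := by
    intro i
    have hiter : IntervalIntegrable Real.log volume (-h) h :=
      (aux_intervalIntegrable_log_neg hh).trans (aux_intervalIntegrable_log hh)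
    have := hiter.comp_sub_right (c i)
    have he1 : -h + c i = a i := by simp only [ha_def, hc_def]; push_cast; ring
    have he2 : h + c i = a (i+1) := by simp only [ha_def, hc_def]; push_cast; ring
    rw [he1, he2] at this
    exact this.neg
  have hg_int : ∀ i : ℕ, i < n → IntervalIntegrable g volume (a i) (a (i+1)) := by
    intro i hi
    apply (hbase_int i).congr
    intro u hu
    rw [Set.uIoc_of_le (haeq i)] at hu
    exact (hgeq i hi u ⟨le_of_lt hu.1, hu.2⟩).symm
  -- value of each piece
  have hpiece : ∀ i : ℕ, i < n → ∫ u in (a i)..(a (i+1)), g u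
      = 2 * h - 2 * (h * Real.log h) := by
    intro i hi
    rw [intervalIntegral.integral_congr (g := fun u => -Real.log (u - c i))
      (fun u hu => by
        rw [Set.uIcc_of_le (haeq i)] at hu
        exact hgeq i hi u hu)]
    rw [intervalIntegral.integral_neg]
    have := intervalIntegral.integral_comp_sub_right (a := a i) (b := a (i+1))
      (f := Real.log) (c i)
    rw [this]
    have he1 : a i - c i = -h := by simp only [ha_def, hc_def]; push_cast; ring
    have he2 : a (i+1) - c i = h := by simp only [ha_def, hc_def]; push_cast; ring
    rw [he1, he2, aux_integral_log_sym hh]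
    ring
  -- put it together
  have ha0 : a 0 = 0 := by simp [ha_def]
  have han : a n = M := by
    simp only [ha_def, hh_def]
    field_simp
  have hmain : (∫ u in Set.Icc (0 : ℝ) M, g u) = M + M * Real.log (2 * n / M) := by
    have hIcc : (∫ u in Set.Icc (0:ℝ) M, g u) = ∫ u in (a 0)..(a n), g u := by
      rw [ha0, han, MeasureTheory.integral_Icc_eq_integral_Ioc,
        ← intervalIntegral.integral_of_le hM.le]
    rw [hIcc, ← intervalIntegral.sum_integral_adjacent_intervals hg_int]
    rw [Finset.sum_congr rfl (fun i hi => hpiece i (Finset.mem_range.mp hi))]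
    rw [Finset.sum_const, Finset.card_range, nsmul_eq_mul]
    have hlogh : Real.log h = Real.log M - Real.log (2 * n) := by
      rw [hh_def, Real.log_div (ne_of_gt hM) (by positivity)]
    have hlog2 : Real.log (2 * n / M) = Real.log (2 * n) - Real.log M :=
      Real.log_div (by positivity) (ne_of_gt hM)
    rw [hlogh, hlog2]
    have hnh : (n:ℝ) * h = M / 2 := by rw [hh_def]; field_simp
    linear_combination (2 - 2 * (Real.log M - Real.log (2 * (n:ℝ)))) * hnh
  calc (∫ u in Set.Icc (0 : ℝ) M, g u / M) = (∫ u in Set.Icc (0 : ℝ) M, g u) / M := by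
        rw [integral_div]
    _ = (M + M * Real.log (2 * n / M)) / M := by rw [hmain]
    _ = 1 + Real.log (2 * n / M) := by field_simp
    _ = Real.log (n / M) + 1 + Real.log 2 := by
        rw [Real.log_div (by positivity) (ne_of_gt hM),
          Real.log_div (by positivity) (ne_of_gt hM), Real.log_mul (by norm_num) (by positivity)]
        ring
end

section
/- The normalized logarithmic moment of the unit square in ℝ^2 equals (6 + 2·log 2 − π)/4; that is, ∫_{[−1/2,1/2]^2} log(1/‖u‖) du = (6 + 2·log 2 − π)/4. -/
open MeasureTheory Real
open scoped ENNReal BigOperators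


lemma integrableOn_log_abs :
    IntegrableOn (fun x : ℝ => Real.log |x|) (Set.Icc (-(1/2):ℝ) (1/2)) := by
  rw [integrableOn_Icc_iff_integrableOn_Ioc]
  have h1 : IntegrableOn (fun x : ℝ => Real.log |x|) (Set.Ioc (0:ℝ) (1/2)) := by
    have h : IntegrableOn (fun x : ℝ => -Real.log x) (Set.Ioc (0:ℝ) (1/2)) := by
      apply intervalIntegral.integrableOn_deriv_of_nonneg (g := fun x => x - x * Real.log x)
      · exact (continuous_id.sub Real.continuous_mul_log).continuousOn
      · intro x hx
        have hx0 : x ≠ 0 := ne_of_gt hx.1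
        have h2 := (hasDerivAt_id x).sub ((hasDerivAt_id x).mul (Real.hasDerivAt_log hx0))
        refine h2.congr_deriv ?_
        simp only [id_eq, mul_inv_cancel₀ hx0]
        ring
      · intro x hx
        have : Real.log x ≤ 0 := Real.log_nonpos (le_of_lt hx.1) (by linarith [hx.2])
        linarith
    have h' : IntegrableOn (fun x : ℝ => Real.log x) (Set.Ioc (0:ℝ) (1/2)) := by
      have h'' := h.neg
      have : (-fun x : ℝ => -Real.log x) = (fun x : ℝ => Real.log x) := by
        funext x; simp
      rwa [this] at h''
    apply h'.congr_fun ?_ measurableSet_Ioc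
    intro x hx
    simp [abs_of_pos hx.1]
  have h2 : IntegrableOn (fun x : ℝ => Real.log |x|) (Set.Ioc (-(1/2):ℝ) 0) := by
    have h : IntegrableOn (fun x : ℝ => -Real.log (-x)) (Set.Ioc (-(1/2):ℝ) 0) := by
      apply intervalIntegral.integrableOn_deriv_of_nonneg
        (g := fun x => x + (-x) * Real.log (-x))
      · exact (continuous_id.add (Real.continuous_mul_log.comp continuous_neg)).continuousOn
      · intro x hx
        have hxneg : x < 0 := hx.2
        have hx0 : -x ≠ 0 := ne_of_gt (by linarith)
        have h2 := (hasDerivAt_id x).add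
          (((hasDerivAt_neg x).mul ((Real.hasDerivAt_log hx0).comp x (hasDerivAt_neg x))))
        have hx0' : x ≠ 0 := ne_of_lt hxneg
        refine h2.congr_deriv ?_
        simp only [Function.comp_def, id_eq]
        field_simp
        ring
      · intro x hx
        have : Real.log (-x) ≤ 0 := Real.log_nonpos (by linarith [hx.2]) (by linarith [hx.1])
        linarith
    have h' : IntegrableOn (fun x : ℝ => Real.log (-x)) (Set.Ioc (-(1/2):ℝ) 0) := by
      have h'' := h.neg
      have : (-fun x : ℝ => -Real.log (-x)) = (fun x : ℝ => Real.log (-x)) := by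
        funext x; simp
      rwa [this] at h''
    apply h'.congr_fun ?_ measurableSet_Ioc
    intro x hx
    simp [abs_of_nonpos hx.2]
  have : Set.Ioc (-(1/2):ℝ) (1/2) = Set.Ioc (-(1/2):ℝ) 0 ∪ Set.Ioc (0:ℝ) (1/2) := by
    rw [Set.Ioc_union_Ioc_eq_Ioc] <;> norm_num
  rw [this]
  exact h2.union h1

lemma inner_eval (x : ℝ) (hx : x ≠ 0) :
    ∫ y in (-(1/2):ℝ)..(1/2), Real.log (x^2 + y^2)
      = Real.log (x^2 + 1/4) - 2 + 4*x*Real.arctan (1/(2*x)) := by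
  have hpos : ∀ y : ℝ, 0 < x^2 + y^2 := fun y => by positivity
  set G : ℝ → ℝ := fun y => y * Real.log (x^2 + y^2) - 2*y + 2*x*Real.arctan (y/x) with hG
  have hderiv : ∀ y : ℝ, HasDerivAt G (Real.log (x^2 + y^2)) y := by
    intro y
    have h1 : HasDerivAt (fun y : ℝ => x^2 + y^2) (2*y) y := by
      simpa using (hasDerivAt_pow 2 y).const_add (x^2)
    have h2 : HasDerivAt (fun y : ℝ => Real.log (x^2 + y^2)) ((x^2+y^2)⁻¹ * (2*y)) y :=
      (h1.log (ne_of_gt (hpos y))).congr_deriv (div_eq_inv_mul _ _)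
    have h3 : HasDerivAt (fun y : ℝ => y * Real.log (x^2 + y^2))
        (1 * Real.log (x^2+y^2) + y * ((x^2+y^2)⁻¹ * (2*y))) y := (hasDerivAt_id y).mul h2
    have h4 : HasDerivAt (fun y : ℝ => y / x) (1/x) y := (hasDerivAt_id y).div_const x
    have h5 : HasDerivAt (fun y : ℝ => Real.arctan (y/x)) (1 / (1 + (y/x)^2) * (1/x)) y :=
      h4.arctan
    have h6 := ((h3.sub ((hasDerivAt_id y).const_mul 2)).add (h5.const_mul (2*x)))
    refine h6.congr_deriv ?_
    symm
    have h7 : 1 + (y/x)^2 = (x^2 + y^2)/x^2 := by field_simp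
    rw [h7]
    field_simp
    ring
  rw [intervalIntegral.integral_eq_sub_of_hasDerivAt (fun y _ => hderiv y)
      (Continuous.intervalIntegrable (by
        exact (continuous_const.add (continuous_pow 2)).log (fun y => ne_of_gt (hpos y))) _ _)]
  simp only [hG]
  norm_num
  rw [show ((-(1/2):ℝ))/x = -(x⁻¹*(1/2)) by ring, Real.arctan_neg]
  ring_nf

noncomputable def ψ : ℝ → ℝ := fun x => Real.log (x^2 + 1/4) - 2 + 4*x*Real.arctan (1/(2*x))

noncomputable def Φ : ℝ → ℝ := fun x =>
  x * Real.log (x^2 + 1/4) - 3*x + (1/2) * Real.arctan (2*x) + 2*x^2 * Real.arctan (1/(2*x))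

lemma abs_arctan_le (t : ℝ) : |Real.arctan t| ≤ π/2 := by
  rw [abs_le]
  exact ⟨le_of_lt (Real.neg_pi_div_two_lt_arctan t), le_of_lt (Real.arctan_lt_pi_div_two t)⟩

lemma cont_term : Continuous (fun x : ℝ => 2*x^2 * Real.arctan (1/(2*x))) := by
  rw [continuous_iff_continuousAt]
  intro x
  rcases eq_or_ne x 0 with rfl | hx
  · have h0 : 2*(0:ℝ)^2 * Real.arctan (1/(2*0)) = 0 := by norm_num
    rw [ContinuousAt, h0]
    refine squeeze_zero_norm (f := fun x : ℝ => 2*x^2 * Real.arctan (1/(2*x)))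
      (a := fun x : ℝ => π * x^2) ?_ ?_
    · intro t
      have h1 : |Real.arctan (1/(2*t))| ≤ π/2 := abs_arctan_le _
      have h2 : (0:ℝ) ≤ t^2 := sq_nonneg t
      calc ‖2*t^2 * Real.arctan (1/(2*t))‖ = 2*t^2 * |Real.arctan (1/(2*t))| := by
            rw [norm_eq_abs, abs_mul, abs_of_nonneg (by positivity : (0:ℝ) ≤ 2*t^2)]
        _ ≤ 2*t^2 * (π/2) := by
            apply mul_le_mul_of_nonneg_left h1 (by positivity)
        _ = π * t^2 := by ring
    · have : Continuous (fun x : ℝ => π * x^2) := by continuity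
      simpa using this.tendsto 0
  · apply ContinuousAt.mul
    · fun_prop
    · apply Real.continuous_arctan.continuousAt.comp
      have h2x : 2*x ≠ 0 := by simpa using hx
      exact (continuousAt_const.div (by fun_prop) (by simpa using hx))

lemma Phi_cont : Continuous Φ := by
  unfold Φ
  have hlog : Continuous fun x : ℝ => Real.log (x^2 + 1/4) :=
    ((continuous_pow 2).add continuous_const).log (fun x => by dsimp only [Pi.add_apply]; positivity)
  exact (((continuous_id.mul hlog).sub (continuous_const.mul continuous_id)).add
    (continuous_const.mul (Real.continuous_arctan.comp (continuous_const.mul continuous_id)))).add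
    cont_term

lemma Phi_deriv (x : ℝ) (hx : x ≠ 0) : HasDerivAt Φ (ψ x) x := by
  have hq : x^2 + 1/4 ≠ 0 := by positivity
  have h2x : (2:ℝ)*x ≠ 0 := by simpa using hx
  have h1 : HasDerivAt (fun x : ℝ => x^2 + 1/4) (2*x) x := by
    simpa using (hasDerivAt_pow 2 x).add_const (1/4)
  have h2 : HasDerivAt (fun x : ℝ => Real.log (x^2 + 1/4)) ((x^2+1/4)⁻¹ * (2*x)) x :=
    (h1.log hq).congr_deriv (div_eq_inv_mul _ _)
  have h3 : HasDerivAt (fun x : ℝ => x * Real.log (x^2 + 1/4))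
      (1 * Real.log (x^2+1/4) + x * ((x^2+1/4)⁻¹ * (2*x))) x := (hasDerivAt_id x).mul h2
  have h4 : HasDerivAt (fun x : ℝ => 2*x) 2 x := by
    simpa using (hasDerivAt_id x).const_mul (2:ℝ)
  have h5 : HasDerivAt (fun x : ℝ => Real.arctan (2*x)) (1 / (1 + (2*x)^2) * 2) x := h4.arctan
  have h6 : HasDerivAt (fun x : ℝ => (2*x)⁻¹) (-(2) / (2*x)^2) x := h4.inv h2x
  have h7 : HasDerivAt (fun x : ℝ => Real.arctan ((2*x)⁻¹))
      (1 / (1 + ((2*x)⁻¹)^2) * (-(2) / (2*x)^2)) x := h6.arctan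
  have h8 : HasDerivAt (fun x : ℝ => 2*x^2)  (2*(2*x)) x := by
    simpa using (hasDerivAt_pow 2 x).const_mul (2:ℝ)
  have h9 := (h8.mul h7)
  have h10 := ((h3.sub ((hasDerivAt_id x).const_mul 3)).add (h5.const_mul (1/2))).add h9
  have heq : Φ = fun x : ℝ => (x * Real.log (x^2+1/4) - 3 * x) + (1/2) * Real.arctan (2*x)
      + 2*x^2 * Real.arctan ((2*x)⁻¹) := by
    funext t; simp [Φ, one_div]
  rw [heq]
  refine h10.congr_deriv ?_
  symm
  unfold ψ
  rw [one_div (2*x)]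
  have h11 : 1 + ((2*x)⁻¹)^2 = (1 + (2*x)^2) / (2*x)^2 := by field_simp; ring
  rw [h11]
  field_simp
  ring

lemma psi_integrable (a b : ℝ) : IntervalIntegrable ψ volume a b := by
  unfold ψ
  apply IntervalIntegrable.add
  · apply Continuous.intervalIntegrable
    exact (((continuous_pow 2).add continuous_const).log (fun x => by dsimp only [Pi.add_apply]; positivity)).sub
      continuous_const
  · rw [intervalIntegrable_iff]
    apply Measure.integrableOn_of_bounded (M := (2*π) * max |a| |b|)
    · exact (measure_Ioc_lt_top).ne
    · apply Measurable.aestronglyMeasurable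
      apply Measurable.mul (by fun_prop)
      exact Real.measurable_arctan.comp (measurable_const.div (by fun_prop))
    · apply (ae_restrict_mem measurableSet_uIoc).mono
      intro t ht
      have h1 : |Real.arctan (1/(2*t))| ≤ π/2 := abs_arctan_le _
      have h2 : |t| ≤ max |a| |b| := by
        rw [abs_le]
        constructor
        · have hinf : -(max |a| |b|) ≤ a ⊓ b := le_inf
            (by linarith [neg_abs_le a, le_max_left |a| |b|])
            (by linarith [neg_abs_le b, le_max_right |a| |b|])
          linarith [ht.1]
        · have hsup : a ⊔ b ≤ max |a| |b| := sup_le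
            ((le_abs_self a).trans (le_max_left _ _))
            ((le_abs_self b).trans (le_max_right _ _))
          linarith [ht.2]
      calc ‖4*t*Real.arctan (1/(2*t))‖ = 4*|t| * |Real.arctan (1/(2*t))| := by
            rw [norm_eq_abs, abs_mul, abs_mul]; norm_num
        _ ≤ 4*(max |a| |b|) * (π/2) := by
            apply mul_le_mul (by apply mul_le_mul_of_nonneg_left h2; norm_num) h1 (abs_nonneg _)
            positivity
        _ = (2*π) * max |a| |b| := by ring


lemma sq_reduction :
    (∫ u in {u : EuclideanSpace ℝ (Fin 2) | ∀ i, u i ∈ Set.Icc (-(1/2) : ℝ) (1/2)},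
        Real.log (1 / ‖u‖))
    = ∫ p in (Set.Icc (-(1/2):ℝ) (1/2)) ×ˢ (Set.Icc (-(1/2):ℝ) (1/2)),
        -(Real.log (p.1^2 + p.2^2) / 2) := by
  rw [← ((EuclideanSpace.volume_preserving_symm_measurableEquiv_toLp (Fin 2)).symm).setIntegral_preimage_emb
      (MeasurableEquiv.measurableEmbedding _)]
  rw [← ((volume_preserving_finTwoArrow ℝ).symm).setIntegral_preimage_emb
      (MeasurableEquiv.measurableEmbedding _)]
  have hset : (MeasurableEquiv.finTwoArrow.symm ⁻¹'
      ((MeasurableEquiv.toLp 2 (Fin 2 → ℝ)).symm.symm ⁻¹'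
        {u : EuclideanSpace ℝ (Fin 2) | ∀ i, u i ∈ Set.Icc (-(1/2) : ℝ) (1/2)}))
      = (Set.Icc (-(1/2):ℝ) (1/2)) ×ˢ (Set.Icc (-(1/2):ℝ) (1/2)) := by
    ext p
    simp [Fin.forall_fin_two, Set.mem_prod, Prod.le_def, and_assoc]
    tauto
  rw [hset]
  apply setIntegral_congr_fun ((measurableSet_Icc).prod (measurableSet_Icc))
  intro p _
  have hcoord : ∀ i : Fin 2, ((MeasurableEquiv.toLp 2 (Fin 2 → ℝ)).symm.symm
      (MeasurableEquiv.finTwoArrow.symm p)) i = ![p.1, p.2] i := fun i => rfl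
  have hnorm : ‖(MeasurableEquiv.toLp 2 (Fin 2 → ℝ)).symm.symm
      (MeasurableEquiv.finTwoArrow.symm p)‖ = Real.sqrt (p.1^2 + p.2^2) := by
    rw [EuclideanSpace.norm_eq]
    congr 1
    rw [Fin.sum_univ_two, hcoord 0, hcoord 1]
    simp [sq_abs]
  beta_reduce
  rw [hnorm, one_div, Real.log_inv, Real.log_sqrt (by positivity)]

lemma Phi_zero : Φ 0 = 0 := by
  simp [Φ]

lemma outer_eval : ∫ x in (-(1/2):ℝ)..(1/2), ψ x = -Real.log 2 - 3 + π/2 := by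
  rw [← intervalIntegral.integral_add_adjacent_intervals
      (psi_integrable (-(1/2)) 0) (psi_integrable 0 (1/2))]
  have h1 : ∫ x in (0:ℝ)..(1/2), ψ x = Φ (1/2) - Φ 0 :=
    intervalIntegral.integral_eq_sub_of_hasDeriv_right_of_le (by norm_num)
      Phi_cont.continuousOn
      (fun x hx => (Phi_deriv x (ne_of_gt hx.1)).hasDerivWithinAt)
      (psi_integrable 0 (1/2))
  have h2 : ∫ x in (-(1/2):ℝ)..0, ψ x = Φ 0 - Φ (-(1/2)) :=
    intervalIntegral.integral_eq_sub_of_hasDeriv_right_of_le (by norm_num)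
      Phi_cont.continuousOn
      (fun x hx => (Phi_deriv x (ne_of_lt hx.2)).hasDerivWithinAt)
      (psi_integrable (-(1/2)) 0)
  rw [h1, h2, Phi_zero]
  have ha : Φ (1/2) = -(1/2) * Real.log 2 - 3/2 + π/4 := by
    have : ((1:ℝ)/2)^2 + 1/4 = 1/2 := by norm_num
    simp only [Φ, this]
    norm_num [Real.arctan_one]
    rw [show ((1:ℝ)/2) = 2⁻¹ by norm_num, Real.log_inv]
    ring
  have hb : Φ (-(1/2)) = (1/2) * Real.log 2 + 3/2 - π/4 := by
    have : (-(1:ℝ)/2)^2 + 1/4 = 1/2 := by norm_num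
    simp only [Φ]
    norm_num [Real.arctan_one, Real.arctan_neg]
    rw [show ((1:ℝ)/2) = 2⁻¹ by norm_num, Real.log_inv]
    ring
  rw [ha, hb]
  ring

lemma ae_ne_zero_fst :
    ∀ᵐ p : ℝ × ℝ ∂((volume : Measure ℝ).prod (volume : Measure ℝ)), p.1 ≠ 0 := by
  rw [ae_iff]
  have hset : {p : ℝ × ℝ | ¬ p.1 ≠ 0} = ({(0:ℝ)} : Set ℝ) ×ˢ (Set.univ : Set ℝ) := by
    ext p
    simp only [Set.mem_setOf_eq, ne_eq, not_not, Set.mem_prod, Set.mem_singleton_iff,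
      Set.mem_univ, and_true]
  rw [hset, Measure.prod_prod]
  simp

lemma sq_integrable :
    IntegrableOn (fun p : ℝ × ℝ => -(Real.log (p.1^2 + p.2^2) / 2))
      ((Set.Icc (-(1/2):ℝ) (1/2)) ×ˢ (Set.Icc (-(1/2):ℝ) (1/2)))
      ((volume : Measure ℝ).prod (volume : Measure ℝ)) := by
  set s : Set ℝ := Set.Icc (-(1/2):ℝ) (1/2) with hs
  have hone : Integrable (fun _ : ℝ => (1:ℝ)) (volume.restrict s) := by
    rw [← IntegrableOn]
    exact integrableOn_const measure_Icc_lt_top.ne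
  have hgs : Integrable (fun x : ℝ => -Real.log |x|) (volume.restrict s) :=
    integrableOn_log_abs.neg
  have hprod : Integrable (fun p : ℝ × ℝ => (-Real.log |p.1|) * 1)
      ((volume.restrict s).prod (volume.restrict s)) := hgs.mul_prod hone
  rw [Measure.prod_restrict] at hprod
  have hmeas : AEStronglyMeasurable (fun p : ℝ × ℝ => -(Real.log (p.1^2 + p.2^2) / 2))
      (((volume : Measure ℝ).prod (volume : Measure ℝ)).restrict (s ×ˢ s)) := by
    apply Measurable.aestronglyMeasurable
    exact ((Real.measurable_log.comp
      (((measurable_fst.pow_const 2).add (measurable_snd.pow_const 2)))).div_const 2).neg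
  apply Integrable.mono' hprod hmeas
  have hmem : ∀ᵐ p : ℝ × ℝ ∂(((volume : Measure ℝ).prod (volume : Measure ℝ)).restrict (s ×ˢ s)),
      p ∈ s ×ˢ s := ae_restrict_mem (measurableSet_Icc.prod measurableSet_Icc)
  have hne : ∀ᵐ p : ℝ × ℝ ∂(((volume : Measure ℝ).prod (volume : Measure ℝ)).restrict (s ×ˢ s)),
      p.1 ≠ 0 := by
    exact ae_restrict_of_ae ae_ne_zero_fst
  filter_upwards [hmem, hne] with p hp hp1
  obtain ⟨hx, hy⟩ := hp
  set x := p.1; set y := p.2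
  have hx2 : x^2 ≤ 1/4 := by
    rw [hs, Set.mem_Icc] at hx; nlinarith [hx.1, hx.2]
  have hy2 : y^2 ≤ 1/4 := by
    rw [hs, Set.mem_Icc] at hy; nlinarith [hy.1, hy.2]
  have hxpos : 0 < x^2 := by positivity
  have hpos : 0 < x^2 + y^2 := by positivity
  have hle1 : x^2 + y^2 ≤ 1 := by linarith
  have hlog_nonpos : Real.log (x^2 + y^2) ≤ 0 := Real.log_nonpos (le_of_lt hpos) hle1
  have hmono : Real.log (x^2) ≤ Real.log (x^2 + y^2) :=
    Real.log_le_log hxpos (by nlinarith [sq_nonneg y])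
  have hlogsq : Real.log (x^2) = 2 * Real.log |x| := by
    rw [← sq_abs x, Real.log_pow]
    norm_num
  rw [norm_eq_abs, abs_of_nonneg (by linarith : (0:ℝ) ≤ -(Real.log (x^2+y^2)/2)), mul_one]
  linarith

theorem square_log_moment :
    (∫ u in {u : EuclideanSpace ℝ (Fin 2) | ∀ i, u i ∈ Set.Icc (-(1/2) : ℝ) (1/2)},
        Real.log (1 / ‖u‖)) = (6 + 2 * Real.log 2 - Real.pi) / 4 := by
  rw [sq_reduction]
  rw [show (volume : Measure (ℝ × ℝ)) = (volume : Measure ℝ).prod (volume : Measure ℝ) from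
    Measure.volume_eq_prod ℝ ℝ]
  rw [setIntegral_prod _ sq_integrable]
  have hcong : ∀ᵐ x : ℝ ∂(volume : Measure ℝ), x ∈ Set.Icc (-(1/2):ℝ) (1/2) →
      (∫ y in Set.Icc (-(1/2):ℝ) (1/2), -(Real.log (x^2 + y^2)/2)) = -ψ x / 2 := by
    have hne : ∀ᵐ x : ℝ ∂(volume : Measure ℝ), x ≠ 0 := by
      rw [ae_iff]
      simp only [ne_eq, not_not]
      rw [show {a : ℝ | a = 0} = ({0} : Set ℝ) by ext a; simp]
      simp
    filter_upwards [hne] with x hx _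
    rw [show (fun y : ℝ => -(Real.log (x^2 + y^2)/2))
        = (fun y : ℝ => (-(1:ℝ)/2) * Real.log (x^2 + y^2)) by funext y; ring]
    rw [integral_const_mul]
    have h2 : ∫ y in Set.Icc (-(1/2):ℝ) (1/2), Real.log (x^2 + y^2)
        = ∫ y in (-(1/2):ℝ)..(1/2), Real.log (x^2 + y^2) := by
      rw [intervalIntegral.integral_of_le (by norm_num), ← integral_Icc_eq_integral_Ioc]
    rw [h2, inner_eval x hx]
    unfold ψ
    ring
  rw [setIntegral_congr_ae measurableSet_Icc hcong]
  have h3 : ∫ x in Set.Icc (-(1/2):ℝ) (1/2), -ψ x / 2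
      = ∫ x in (-(1/2):ℝ)..(1/2), -ψ x / 2 := by
    rw [intervalIntegral.integral_of_le (by norm_num), ← integral_Icc_eq_integral_Ioc]
  rw [h3]
  have h4 : ∫ x in (-(1/2):ℝ)..(1/2), -ψ x / 2
      = -(∫ x in (-(1/2):ℝ)..(1/2), ψ x)/2 := by
    rw [intervalIntegral.integral_div, intervalIntegral.integral_neg]
  rw [h4, outer_eval]
  ring
end
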